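/- arXiv:math/0311430 — 6 statements merged into one kernel-verified Lean document; each statement's English description precedes it below -/
import Mathlib

section
/- Let L be a finite meet-semilattice, G and H building sets in L with H ⊆ G, and let G₀ be a minimal element of G \ H. Then Ḡ := G \ {G₀} is again a building set in L. Moreover, for any X ∈ L \ {0̂}: max Ḡ_{≤X} = F_G(X) if G₀ ∉ F_G(X), and max Ḡ_{≤X} = (F_G(X) \ {G₀}) ∪ F_H(G₀) if G₀ ∈ F_G(X). -/
open scoped BigOperators

variable {L : Type*}

/-- The set of maximal elements of `G` below `X` (the `G`-factors of `X`). -/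
def factorsSet [PartialOrder L] (G : Set L) (X : L) : Set L :=
  {g | g ∈ G ∧ g ≤ X ∧ ∀ h ∈ G, h ≤ X → g ≤ h → g = h}

/-- `G` is a building set in the meet-semilattice `L` with minimal element `⊥`:
every element of `G` is nonminimal, and for every `X ≠ ⊥` there is a poset
isomorphism from the product of the lower intervals of the factors of `X`
to the lower interval of `X`, sending the `g`-th "unit vector" to `g`. -/
def IsBuilding (L : Type*) [PartialOrder L] [OrderBot L] (G : Set L) : Prop :=
  (∀ g ∈ G, g ≠ ⊥) ∧
  ∀ X : L, X ≠ ⊥ →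
    ∃ φ : ((g : factorsSet G X) → Set.Icc (⊥ : L) g.1) ≃o Set.Icc (⊥ : L) X,
      ∀ (g : factorsSet G X) (u : (h : factorsSet G X) → Set.Icc (⊥ : L) h.1),
        (u g : L) = g.1 → (∀ h, h ≠ g → (u h : L) = (⊥ : L)) → ((φ u : L) = g.1)

/-- A finite subset `S ⊆ G` is nested: every antichain in `S` of size at least 2
has a least upper bound in `L` which does not belong to `G`. -/
def IsNested [PartialOrder L] (G : Set L) (S : Finset L) : Prop :=
  ↑S ⊆ G ∧ ∀ A : Finset L, A ⊆ S → IsAntichain (· ≤ ·) (A : Set L) → 2 ≤ A.card →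
    ∃ j, IsLUB (A : Set L) j ∧ j ∉ G

/-- The nested set complex, as the collection of its faces. -/
def nestedComplex [PartialOrder L] (G : Set L) : Set (Finset L) := {S | IsNested G S}

/-- The order complex of a poset: the collection of finite chains. -/
def chainComplex (V : Type*) [Preorder V] : Set (Finset V) :=
  {S | IsChain (· ≤ ·) (S : Set V)}

/-- The order complex of `L \ {⊥}`, with vertex set inside `L`. -/
def orderComplexBot (L : Type*) [PartialOrder L] [OrderBot L] : Set (Finset L) :=
  {S | (S : Set L) ⊆ {x | x ≠ ⊥} ∧ IsChain (· ≤ ·) (S : Set L)}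

/-- Geometric realization of an abstract simplicial complex (given by its set of
faces, as finsets of the vertex type `V`): convex combinations of vertices
supported on a face. -/
abbrev geomReal {V : Type*} (K : Set (Finset V)) : Type _ :=
  {f : V → ℝ // (∀ v, 0 ≤ f v) ∧ ∃ s ∈ K, (∀ v, f v ≠ 0 → v ∈ s) ∧ ∑ v ∈ s, f v = 1}

/-- The subposet of the face poset of the nested set complex consisting of the
nonempty nested sets whose join is `≤ X`. -/
def NestedFiber [PartialOrder L] (G : Set L) (X : L) :=
  {S : Finset L // IsNested G S ∧ S.Nonempty ∧ ∃ j, IsLUB (S : Set L) j ∧ j ≤ X}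

instance [PartialOrder L] (G : Set L) (X : L) : PartialOrder (NestedFiber G X) := by
  unfold NestedFiber; infer_instance

/-- The face poset of the nested set complex: nonempty nested sets ordered by inclusion. -/
def NestedFaces [PartialOrder L] (G : Set L) :=
  {S : Finset L // IsNested G S ∧ S.Nonempty}

instance [PartialOrder L] (G : Set L) : PartialOrder (NestedFaces G) := by
  unfold NestedFaces; infer_instance

/-- The combinatorial blowup of a poset `M` at `X`: elements `Y` (marked `false`)
with `Y ≱ X`, and elements `Ŷ` (marked `true`) with `Y ≱ X` such that `Y ∨ X`
exists; ordered by `Y ≺ Z` iff `Y < Z`, `Ŷ ≺ Ẑ` iff `Y < Z`, `Y ≺ Ẑ` iff `Y ≤ Z`. -/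
def Bl {M : Type*} [PartialOrder M] (X : M) :=
  {p : M × Bool // ¬ X ≤ p.1 ∧ (p.2 = true → ∃ j, IsLUB {p.1, X} j)}

noncomputable instance {M : Type*} [PartialOrder M] (X : M) : PartialOrder (Bl X) := by
  unfold Bl; infer_instance

/-- The atoms of `L`, used as coordinates for the realization of nested set fans. -/
def Atoms (L : Type*) [PartialOrder L] [OrderBot L] := {a : L // IsAtom a}

open Classical in
/-- The characteristic vector of the set of atoms below `X`. -/
noncomputable def charVec [PartialOrder L] [OrderBot L] (X : L) : Atoms L → ℝ :=
  fun a => if a.1 ≤ X then 1 else 0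

/-- The polyhedral cone spanned by the characteristic vectors of elements of `S`. -/
noncomputable def coneOf [PartialOrder L] [OrderBot L] (S : Finset L) : Set (Atoms L → ℝ) :=
  {y | ∃ c : L → ℝ, (∀ x, 0 ≤ c x) ∧ y = ∑ x ∈ S, c x • charVec x}

/-- The fan associated to a building set: the cones spanned by the nested sets. -/
def fanOf [PartialOrder L] [OrderBot L] (G : Set L) : Set (Set (Atoms L → ℝ)) :=
  {C | ∃ S : Finset L, IsNested G S ∧ C = coneOf S}

/-- The cone generated by a ray `v` together with a cone `c`. -/
def rayJoin {E : Type*} [AddCommMonoid E] [Module ℝ E] (v : E) (c : Set E) : Set E :=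
  {y | ∃ a : ℝ, ∃ x ∈ c, 0 ≤ a ∧ y = a • v + x}

/-- The stellar subdivision of a fan `F` at the cone `σ` with new ray `v`:
cones not containing `σ` are kept, and each cone `τ ⊇ σ` is replaced by the
joins of `v` with the faces of `τ` not containing `σ`. -/
def stellarSub {E : Type*} [AddCommMonoid E] [Module ℝ E]
    (F : Set (Set E)) (σ : Set E) (v : E) : Set (Set E) :=
  {τ | τ ∈ F ∧ ¬ σ ⊆ τ} ∪
  {D | ∃ τ ∈ F, σ ⊆ τ ∧ ∃ c ∈ F, c ⊆ τ ∧ ¬ σ ⊆ c ∧ D = rayJoin v c}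

section Stmt10Aux

variable [SemilatticeInf L] [OrderBot L]

private noncomputable def botc {z : L} : Set.Icc (⊥:L) z := ⟨⊥, le_rfl, bot_le⟩

@[simp] private lemma botc_val {z : L} : ((botc (z := z)) : L) = ⊥ := rfl

open Classical in
private noncomputable def unitV (S : Set L) (i : ↥S) : (j : ↥S) → Set.Icc (⊥:L) j.1 :=
  fun j => if j = i then ⟨j.1, bot_le, le_rfl⟩ else botc

private lemma unitV_self (S : Set L) (i : ↥S) : ((unitV S i i) : L) = i.1 := by simp [unitV]

private lemma unitV_ne (S : Set L) (i j : ↥S) (h : j ≠ i) : ((unitV S i j) : L) = ⊥ := by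
  simp [unitV, h]

private lemma iso_bot {ι : Type*} {κ : ι → L} {Z : L}
    (e : ((i : ι) → Set.Icc (⊥:L) (κ i)) ≃o Set.Icc (⊥:L) Z) :
    ((e fun _ => botc) : L) = ⊥ := by
  have h1 : (fun _ => botc : (i : ι) → Set.Icc (⊥:L) (κ i)) ≤ e.symm ⟨⊥, le_rfl, bot_le⟩ :=
    fun i => Subtype.coe_le_coe.mp bot_le
  have h2 := e.monotone h1
  rw [e.apply_symm_apply] at h2
  exact le_bot_iff.mp (Subtype.coe_le_coe.mpr h2)

private lemma iso_bot_symm {ι : Type*} {κ : ι → L} {Z : L}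
    (e : ((i : ι) → Set.Icc (⊥:L) (κ i)) ≃o Set.Icc (⊥:L) Z) (z : Set.Icc (⊥:L) Z)
    (hz : (z : L) = ⊥) : e.symm z = fun _ => botc := by
  have h : z = e (fun _ => botc) := Subtype.ext (by rw [hz, iso_bot e])
  rw [h, e.symm_apply_apply]

open Classical in
private noncomputable def pack {A : Set L} {G₀ : L} (hG₀A : G₀ ∈ A)
    (other : (g : ↥A) → g.1 ≠ G₀ → Set.Icc (⊥:L) g.1)
    (c : Set.Icc (⊥:L) G₀) : (g : ↥A) → Set.Icc (⊥:L) g.1 :=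
  fun g => if h : g.1 = G₀ then ⟨c.1, c.2.1, c.2.2.trans h.ge⟩ else other g h

private lemma pack_pos {A : Set L} {G₀ : L} (hG₀A : G₀ ∈ A)
    (other : (g : ↥A) → g.1 ≠ G₀ → Set.Icc (⊥:L) g.1) (c : Set.Icc (⊥:L) G₀)
    (g : ↥A) (h : g.1 = G₀) : ((pack hG₀A other c g) : L) = c.1 := by
  simp only [pack, dif_pos h]

private lemma pack_neg {A : Set L} {G₀ : L} (hG₀A : G₀ ∈ A)
    (other : (g : ↥A) → g.1 ≠ G₀ → Set.Icc (⊥:L) g.1) (c : Set.Icc (⊥:L) G₀)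
    (g : ↥A) (h : g.1 ≠ G₀) : pack hG₀A other c g = other g h := by
  simp only [pack, dif_neg h]

private noncomputable def afD {A : Set L} {G₀ X : L} (hG₀A : G₀ ∈ A)
    (φ : ((g : ↥A) → Set.Icc (⊥:L) g.1) ≃o Set.Icc (⊥:L) X)
    (hle : ∀ c : Set.Icc (⊥:L) G₀, ((φ (pack hG₀A (fun _ _ => botc) c)) : L) ≤ G₀)
    (c : Set.Icc (⊥:L) G₀) : Set.Icc (⊥:L) G₀ :=
  ⟨(φ (pack hG₀A (fun _ _ => botc) c) : L),
    (φ (pack hG₀A (fun _ _ => botc) c)).2.1, hle c⟩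

private noncomputable def aiD {A : Set L} {G₀ X : L} (hG₀A : G₀ ∈ A) (hG₀X : G₀ ≤ X)
    (φ : ((g : ↥A) → Set.Icc (⊥:L) g.1) ≃o Set.Icc (⊥:L) X)
    (z : Set.Icc (⊥:L) G₀) : Set.Icc (⊥:L) G₀ :=
  (φ.symm ⟨z.1, z.2.1, z.2.2.trans hG₀X⟩) ⟨G₀, hG₀A⟩

private noncomputable def MK {A B F : Set L} {G₀ : L} (hG₀A : G₀ ∈ A)
    (memBF : ∀ b : L, b ∈ B → b ∈ F) (memAF : ∀ g : L, g ∈ A → g ≠ G₀ → g ∈ F)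
    (t : ((b : ↥B) → Set.Icc (⊥:L) b.1) → Set.Icc (⊥:L) G₀)
    (u : (f : ↥F) → Set.Icc (⊥:L) f.1) : (g : ↥A) → Set.Icc (⊥:L) g.1 :=
  pack hG₀A (fun g h => u ⟨g.1, memAF g.1 g.2 h⟩)
    (t (fun b => u ⟨b.1, memBF b.1 b.2⟩))

open Classical in
private noncomputable def IV {A B F : Set L} {G₀ : L} (hG₀A : G₀ ∈ A)
    (memFA : ∀ f : L, f ∈ F → f ∉ B → f ∈ A ∧ f ≠ G₀)
    (s : Set.Icc (⊥:L) G₀ → (b : ↥B) → Set.Icc (⊥:L) b.1)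
    (v : (g : ↥A) → Set.Icc (⊥:L) g.1) : (f : ↥F) → Set.Icc (⊥:L) f.1 :=
  fun f => if h : f.1 ∈ B then s (v ⟨G₀, hG₀A⟩) ⟨f.1, h⟩ else v ⟨f.1, (memFA f.1 f.2 h).1⟩

private lemma glue {A B F : Set L} {G₀ X : L}
    (hG₀A : G₀ ∈ A) (hG₀X : G₀ ≤ X)
    (hF : F = (A \ {G₀}) ∪ B)
    (hdisj : ∀ b ∈ B, b ∈ A → b = G₀)
    (φ : ((g : ↥A) → Set.Icc (⊥:L) g.1) ≃o Set.Icc (⊥:L) X)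
    (Pφ : ∀ (g : ↥A) (u : (h : ↥A) → Set.Icc (⊥:L) h.1),
        (u g : L) = g.1 → (∀ h, h ≠ g → (u h : L) = (⊥:L)) → ((φ u : L) = g.1))
    (ψ : ((b : ↥B) → Set.Icc (⊥:L) b.1) ≃o Set.Icc (⊥:L) G₀)
    (Pψ : ∀ (g : ↥B) (u : (h : ↥B) → Set.Icc (⊥:L) h.1),
        (u g : L) = g.1 → (∀ h, h ≠ g → (u h : L) = (⊥:L)) → ((ψ u : L) = g.1)) :
    ∃ φ' : ((g : ↥F) → Set.Icc (⊥:L) g.1) ≃o Set.Icc (⊥:L) X,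
      ∀ (g : ↥F) (u : (h : ↥F) → Set.Icc (⊥:L) h.1),
        (u g : L) = g.1 → (∀ h, h ≠ g → (u h : L) = (⊥:L)) → ((φ' u : L) = g.1) := by
  classical
  have memBF : ∀ b : L, b ∈ B → b ∈ F := fun b hb => by rw [hF]; exact Or.inr hb
  have memAF : ∀ g : L, g ∈ A → g ≠ G₀ → g ∈ F := fun g hg hne => by
    rw [hF]; exact Or.inl ⟨hg, hne⟩
  have memFA : ∀ f : L, f ∈ F → f ∉ B → f ∈ A ∧ f ≠ G₀ := by
    intro f hf hfb
    rw [hF] at hf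
    rcases hf with h | h
    · exact ⟨h.1, h.2⟩
    · exact absurd h hfb
  have hAnB : ∀ g : L, g ∈ A → g ≠ G₀ → g ∉ B := fun g hg hne hb => hne (hdisj g hb hg)
  have hφu : ∀ i : ↥A, ((φ (unitV A i)) : L) = i.1 := fun i =>
    Pφ i _ (unitV_self A i) fun j hj => unitV_ne A i j hj
  have hpack_le_unit : ∀ c : Set.Icc (⊥:L) G₀,
      pack hG₀A (fun _ _ => botc) c ≤ unitV A ⟨G₀, hG₀A⟩ := by
    intro c g
    rw [← Subtype.coe_le_coe]
    by_cases h : g.1 = G₀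
    · rw [pack_pos hG₀A _ _ g h]
      have hgg : g = ⟨G₀, hG₀A⟩ := Subtype.ext h
      rw [hgg, unitV_self]
      exact c.2.2
    · rw [pack_neg hG₀A _ _ g h, botc_val]
      exact bot_le
  have hα_le : ∀ c : Set.Icc (⊥:L) G₀,
      ((φ (pack hG₀A (fun _ _ => botc) c)) : L) ≤ G₀ := by
    intro c
    have h2 := Subtype.coe_le_coe.mpr (φ.monotone (hpack_le_unit c))
    rwa [hφu ⟨G₀, hG₀A⟩] at h2
  have hsupp : ∀ w : (g : ↥A) → Set.Icc (⊥:L) g.1, w ≤ unitV A ⟨G₀, hG₀A⟩ →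
      w = pack hG₀A (fun _ _ => botc) (w ⟨G₀, hG₀A⟩) := by
    intro w hw
    funext g
    by_cases h : g.1 = G₀
    · have hgg : g = ⟨G₀, hG₀A⟩ := Subtype.ext h
      subst hgg
      exact Subtype.ext (pack_pos hG₀A _ _ _ rfl).symm
    · have h1 := Subtype.coe_le_coe.mpr (hw g)
      rw [unitV_ne A ⟨G₀, hG₀A⟩ g (fun e => h (congrArg Subtype.val e))] at h1
      apply Subtype.ext
      rw [pack_neg hG₀A _ _ g h, botc_val]
      exact le_bot_iff.mp h1
  have h_af_ai : ∀ z, afD hG₀A φ hα_le (aiD hG₀A hG₀X φ z) = z := by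
    intro z
    have hw : φ.symm ⟨z.1, z.2.1, z.2.2.trans hG₀X⟩ ≤ unitV A ⟨G₀, hG₀A⟩ := by
      rw [← φ.le_iff_le, φ.apply_symm_apply, ← Subtype.coe_le_coe, hφu ⟨G₀, hG₀A⟩]
      exact z.2.2
    have h2 := hsupp _ hw
    apply Subtype.ext
    show (φ (pack hG₀A (fun _ _ => botc) (aiD hG₀A hG₀X φ z)) : L) = z.1
    have h3 : pack hG₀A (fun _ _ => botc) (aiD hG₀A hG₀X φ z)
        = φ.symm ⟨z.1, z.2.1, z.2.2.trans hG₀X⟩ := h2.symm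
    rw [h3, φ.apply_symm_apply]
  have h_ai_af : ∀ c, aiD hG₀A hG₀X φ (afD hG₀A φ hα_le c) = c := by
    intro c
    have h1 : (⟨(afD hG₀A φ hα_le c).1, (afD hG₀A φ hα_le c).2.1,
        (afD hG₀A φ hα_le c).2.2.trans hG₀X⟩ : Set.Icc (⊥:L) X)
        = φ (pack hG₀A (fun _ _ => botc) c) := Subtype.ext rfl
    simp only [aiD]
    rw [h1, φ.symm_apply_apply]
    exact Subtype.ext (pack_pos hG₀A _ _ _ rfl)
  have hai_bot : ∀ z : Set.Icc (⊥:L) G₀, (z : L) = ⊥ →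
      ((aiD hG₀A hG₀X φ z) : L) = ⊥ := by
    intro z hz
    simp only [aiD]
    rw [iso_bot_symm φ ⟨z.1, z.2.1, z.2.2.trans hG₀X⟩ hz]
    rfl
  have hpack_mono : ∀ (o o' : (g : ↥A) → g.1 ≠ G₀ → Set.Icc (⊥:L) g.1)
      (c c' : Set.Icc (⊥:L) G₀),
      (∀ g h, o g h ≤ o' g h) → c ≤ c' → pack hG₀A o c ≤ pack hG₀A o' c' := by
    intro o o' c c' ho hc g
    by_cases h : g.1 = G₀
    · rw [← Subtype.coe_le_coe, pack_pos hG₀A _ _ g h, pack_pos hG₀A _ _ g h]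
      exact Subtype.coe_le_coe.mpr hc
    · rw [pack_neg hG₀A _ _ g h, pack_neg hG₀A _ _ g h]
      exact ho g h
  have haf_mono : ∀ c c', c ≤ c' → afD hG₀A φ hα_le c ≤ afD hG₀A φ hα_le c' := by
    intro c c' hc
    have h1 := φ.monotone (hpack_mono (fun _ _ => botc) (fun _ _ => botc) c c' (fun _ _ => le_rfl) hc)
    exact Subtype.coe_le_coe.mp (Subtype.coe_le_coe.mpr h1)
  have hai_mono : ∀ z z', z ≤ z' → aiD hG₀A hG₀X φ z ≤ aiD hG₀A hG₀X φ z' := by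
    intro z z' hz
    have h1 : (⟨z.1, z.2.1, z.2.2.trans hG₀X⟩ : Set.Icc (⊥:L) X)
        ≤ ⟨z'.1, z'.2.1, z'.2.2.trans hG₀X⟩ :=
      Subtype.coe_le_coe.mp (Subtype.coe_le_coe.mpr hz)
    exact φ.symm.monotone h1 ⟨G₀, hG₀A⟩
  set t : ((b : ↥B) → Set.Icc (⊥:L) b.1) → Set.Icc (⊥:L) G₀ :=
    fun w => aiD hG₀A hG₀X φ (ψ w) with ht
  set s : Set.Icc (⊥:L) G₀ → (b : ↥B) → Set.Icc (⊥:L) b.1 :=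
    fun z => ψ.symm (afD hG₀A φ hα_le z) with hs
  have hst1 : ∀ w, s (t w) = w := by
    intro w
    show ψ.symm (afD hG₀A φ hα_le (aiD hG₀A hG₀X φ (ψ w))) = w
    rw [h_af_ai, ψ.symm_apply_apply]
  have hst2 : ∀ z, t (s z) = z := by
    intro z
    show aiD hG₀A hG₀X φ (ψ (ψ.symm (afD hG₀A φ hα_le z))) = z
    rw [ψ.apply_symm_apply, h_ai_af]
  have ht_mono : ∀ w w', w ≤ w' → t w ≤ t w' := by
    intro w w' hww
    exact hai_mono _ _ (ψ.monotone hww)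
  have hs_mono : ∀ z z', z ≤ z' → s z ≤ s z' := by
    intro z z' hz
    exact ψ.symm.monotone (haf_mono _ _ hz)
  have hMK_mono : ∀ u u', u ≤ u' →
      MK hG₀A memBF memAF t u ≤ MK hG₀A memBF memAF t u' := by
    intro u u' huu
    simp only [MK]
    apply hpack_mono
    · intro g h
      exact huu _
    · exact ht_mono _ _ (fun b => huu _)
  have hIV_mono : ∀ v v', v ≤ v' →
      IV hG₀A memFA s v ≤ IV hG₀A memFA s v' := by
    intro v v' hvv f
    simp only [IV]
    by_cases h : f.1 ∈ B
    · rw [dif_pos h, dif_pos h]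
      exact hs_mono _ _ (hvv _) _
    · rw [dif_neg h, dif_neg h]
      exact hvv _
  have hIVMK : ∀ u, IV hG₀A memFA s (MK hG₀A memBF memAF t u) = u := by
    intro u
    funext f
    by_cases hf : f.1 ∈ B
    · simp only [IV]
      rw [dif_pos hf]
      have h1 : (MK hG₀A memBF memAF t u ⟨G₀, hG₀A⟩ : Set.Icc (⊥:L) G₀)
          = t (fun b => u ⟨b.1, memBF b.1 b.2⟩) :=
        Subtype.ext (pack_pos hG₀A _ _ _ rfl)
      rw [h1, hst1]
    · simp only [IV]
      rw [dif_neg hf]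
      simp only [MK]
      rw [pack_neg hG₀A _ _ _ ((memFA f.1 f.2 hf).2)]
  have hMKIV : ∀ v, MK hG₀A memBF memAF t (IV hG₀A memFA s v) = v := by
    intro v
    funext g
    by_cases h : g.1 = G₀
    · have hgg : g = ⟨G₀, hG₀A⟩ := Subtype.ext h
      subst hgg
      apply Subtype.ext
      simp only [MK]
      rw [pack_pos hG₀A _ _ _ rfl]
      have hres : (fun b : ↥B => IV hG₀A memFA s v ⟨b.1, memBF b.1 b.2⟩)
          = s (v ⟨G₀, hG₀A⟩) := by
        funext b
        simp only [IV]
        rw [dif_pos b.2]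
      rw [hres, hst2]
    · apply Subtype.ext
      simp only [MK]
      rw [pack_neg hG₀A _ _ g h]
      simp only [IV]
      rw [dif_neg (hAnB g.1 g.2 h)]
  refine ⟨⟨⟨fun u => φ (MK hG₀A memBF memAF t u),
      fun v => IV hG₀A memFA s (φ.symm v), ?_, ?_⟩, ?_⟩, ?_⟩
  · intro u
    show IV hG₀A memFA s (φ.symm (φ (MK hG₀A memBF memAF t u))) = u
    rw [φ.symm_apply_apply, hIVMK]
  · intro v
    show φ (MK hG₀A memBF memAF t (IV hG₀A memFA s (φ.symm v))) = v
    rw [hMKIV, φ.apply_symm_apply]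
  · intro u u'
    show φ (MK hG₀A memBF memAF t u) ≤ φ (MK hG₀A memBF memAF t u') ↔ u ≤ u'
    rw [φ.le_iff_le]
    constructor
    · intro h
      have h2 := hIV_mono _ _ h
      rwa [hIVMK, hIVMK] at h2
    · exact fun h => hMK_mono _ _ h
  · intro f₀ u hval hothers
    show (φ (MK hG₀A memBF memAF t u) : L) = f₀.1
    by_cases hfB : f₀.1 ∈ B
    · have hMKu : MK hG₀A memBF memAF t u
          = pack hG₀A (fun _ _ => botc) (t (fun b => u ⟨b.1, memBF b.1 b.2⟩)) := by
        funext g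
        by_cases h : g.1 = G₀
        · apply Subtype.ext
          simp only [MK]
          rw [pack_pos hG₀A _ _ g h, pack_pos hG₀A _ _ g h]
        · apply Subtype.ext
          simp only [MK]
          rw [pack_neg hG₀A _ _ g h, pack_neg hG₀A _ _ g h, botc_val]
          exact hothers ⟨g.1, memAF g.1 g.2 h⟩ (fun e => hAnB g.1 g.2 h
            (by rw [show g.1 = f₀.1 from congrArg Subtype.val e]; exact hfB))
      have hψres : ((ψ (fun b => u ⟨b.1, memBF b.1 b.2⟩)) : L) = f₀.1 := by
        apply Pψ ⟨f₀.1, hfB⟩ (fun b => u ⟨b.1, memBF b.1 b.2⟩)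
        · exact hval
        · intro b hb
          refine hothers ⟨b.1, memBF b.1 b.2⟩ (fun e => hb ?_)
          have e2 : (⟨b.1, memBF b.1 b.2⟩ : ↥F).1 = f₀.1 := congrArg Subtype.val e
          exact Subtype.ext e2
      rw [hMKu]
      calc (φ (pack hG₀A (fun _ _ => botc)
              (t (fun b => u ⟨b.1, memBF b.1 b.2⟩))) : L)
          = (afD hG₀A φ hα_le
              (aiD hG₀A hG₀X φ (ψ (fun b => u ⟨b.1, memBF b.1 b.2⟩)))).1 := rfl
        _ = ((ψ (fun b => u ⟨b.1, memBF b.1 b.2⟩)) : L) := by rw [h_af_ai]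
        _ = f₀.1 := hψres
    · obtain ⟨hfA, hfne⟩ := memFA f₀.1 f₀.2 hfB
      apply Pφ ⟨f₀.1, hfA⟩ (MK hG₀A memBF memAF t u)
      · show (MK hG₀A memBF memAF t u ⟨f₀.1, hfA⟩ : L) = f₀.1
        simp only [MK]
        rw [pack_neg hG₀A _ _ _ hfne]
        exact hval
      · intro g hg
        by_cases h : g.1 = G₀
        · show (MK hG₀A memBF memAF t u g : L) = ⊥
          simp only [MK]
          rw [pack_pos hG₀A _ _ g h]
          have hres : (fun b : ↥B => u ⟨b.1, memBF b.1 b.2⟩)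
              = (fun _ => botc : (b : ↥B) → Set.Icc (⊥:L) b.1) := by
            funext b
            apply Subtype.ext
            rw [botc_val]
            exact hothers ⟨b.1, memBF b.1 b.2⟩ (fun e => hfB
              (by rw [← show b.1 = f₀.1 from congrArg Subtype.val e]; exact b.2))
          rw [hres]
          exact hai_bot _ (iso_bot ψ)
        · show (MK hG₀A memBF memAF t u g : L) = ⊥
          simp only [MK]
          rw [pack_neg hG₀A _ _ g h]
          refine hothers ⟨g.1, memAF g.1 g.2 h⟩ (fun e => hg ?_)
          have e2 : (⟨g.1, memAF g.1 g.2 h⟩ : ↥F).1 = f₀.1 := congrArg Subtype.val e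
          exact Subtype.ext e2

private lemma factorsMeet (G : Set L) (hG : IsBuilding L G) (X : L) (hX : X ≠ ⊥)
    {g g' a : L} (hg : g ∈ factorsSet G X) (hg' : g' ∈ factorsSet G X)
    (hne : g ≠ g') (hag : a ≤ g) (hag' : a ≤ g') : a = ⊥ := by
  classical
  obtain ⟨φ, Pφ⟩ := hG.2 X hX
  have hφu : ∀ i : ↥(factorsSet G X), ((φ (unitV (factorsSet G X) i)) : L) = i.1 := fun i =>
    Pφ i _ (unitV_self _ i) fun j hj => unitV_ne _ i j hj
  have haX : a ≤ X := hag.trans hg.2.1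
  have hle : ∀ i : ↥(factorsSet G X), a ≤ i.1 →
      φ.symm ⟨a, bot_le, haX⟩ ≤ unitV (factorsSet G X) i := by
    intro i hai
    rw [← φ.le_iff_le, φ.apply_symm_apply, ← Subtype.coe_le_coe, hφu i]
    exact hai
  have hwbot : ∀ j, ((φ.symm ⟨a, bot_le, haX⟩ j) : L) = ⊥ := by
    intro j
    by_cases h : j = (⟨g, hg⟩ : ↥(factorsSet G X))
    · have h2 : j ≠ ⟨g', hg'⟩ := by
        rw [h]
        exact fun e => hne (congrArg Subtype.val e)
      have h3 := Subtype.coe_le_coe.mpr (hle ⟨g', hg'⟩ hag' j)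
      rw [unitV_ne _ _ _ h2] at h3
      exact le_bot_iff.mp h3
    · have h3 := Subtype.coe_le_coe.mpr (hle ⟨g, hg⟩ hag j)
      rw [unitV_ne _ _ _ h] at h3
      exact le_bot_iff.mp h3
  have hwb : φ.symm ⟨a, bot_le, haX⟩ = fun _ => botc :=
    funext fun j => Subtype.ext (hwbot j)
  have h4 : (⟨a, bot_le, haX⟩ : Set.Icc (⊥:L) X) = φ (fun _ => botc) := by
    rw [← hwb, φ.apply_symm_apply]
  have h5 := congrArg Subtype.val h4
  exact h5.trans (iso_bot φ)

private lemma existsFactorAbove [Fintype L] (S : Set L) (Y x : L)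
    (hx : x ∈ S) (hxy : x ≤ Y) : ∃ m ∈ factorsSet S Y, x ≤ m := by
  have hfin : {s | s ∈ S ∧ s ≤ Y ∧ x ≤ s}.Finite := Set.toFinite _
  obtain ⟨m, hm, hmax'⟩ := hfin.exists_maximalFor id _ ⟨x, hx, hxy, le_rfl⟩
  have hmax : ∀ a' ∈ {s | s ∈ S ∧ s ≤ Y ∧ x ≤ s}, id m ≤ id a' → id m = id a' :=
    fun a' ha' h => le_antisymm h (hmax' ha' h)
  exact ⟨m, ⟨hm.1, hm.2.1, fun h hh hhY hmh => hmax h ⟨hh, hhY, le_trans hm.2.2 hmh⟩ hmh⟩,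
    hm.2.2⟩

private lemma eq1 (G : Set L) (G₀ : L) (hG₀G : G₀ ∈ G) (X : L)
    (hnf : G₀ ∉ factorsSet G X) : factorsSet (G \ {G₀}) X = factorsSet G X := by
  ext k
  constructor
  · rintro ⟨⟨hkG, hkne'⟩, hkX, hmax⟩
    have hkne : k ≠ G₀ := hkne'
    refine ⟨hkG, hkX, ?_⟩
    intro j hj hjX hkj
    by_cases hj0 : j = G₀
    · have hkjG : k ≤ G₀ := hj0 ▸ hkj
      have hjXG : G₀ ≤ X := hj0 ▸ hjX
      have hnmax : ¬ ∀ h' ∈ G, h' ≤ X → G₀ ≤ h' → G₀ = h' :=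
        fun hm => hnf ⟨hG₀G, hjXG, hm⟩
      push_neg at hnmax
      obtain ⟨h', hh'G, hh'X, hle', hne'⟩ := hnmax
      have hh'ne : h' ≠ G₀ := fun e => hne' e.symm
      have hk' : k = h' := hmax h' ⟨hh'G, hh'ne⟩ hh'X (hkjG.trans hle')
      exact absurd (le_antisymm hkjG (hle'.trans hk'.ge)) hkne
    · exact hmax j ⟨hj, hj0⟩ hjX hkj
  · rintro ⟨hkG, hkX, hmax⟩
    have hkne : k ≠ G₀ := fun e => hnf (e ▸ ⟨hkG, hkX, hmax⟩)
    exact ⟨⟨hkG, hkne⟩, hkX, fun j hj hjX hkj => hmax j hj.1 hjX hkj⟩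

private lemma eq2 [Fintype L] (G H : Set L) (hG : IsBuilding L G)
    (hH1 : ∀ h ∈ H, h ≠ (⊥:L)) (hHG : H ⊆ G)
    (G₀ : L) (hG₀H : G₀ ∉ H)
    (hmin : ∀ g ∈ G, g ∉ H → g ≤ G₀ → g = G₀)
    (X : L) (hX : X ≠ ⊥) (hf : G₀ ∈ factorsSet G X) :
    factorsSet (G \ {G₀}) X = (factorsSet G X \ {G₀}) ∪ factorsSet H G₀ := by
  ext k
  constructor
  · rintro ⟨⟨hkG, hkne'⟩, hkX, hmax⟩
    have hkne : k ≠ G₀ := hkne'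
    by_cases hex : ∃ g ∈ factorsSet G X, g ≠ G₀ ∧ k ≤ g
    · obtain ⟨g, hgf, hgne, hkg⟩ := hex
      have hkg' : k = g := hmax g ⟨hgf.1, hgne⟩ hgf.2.1 hkg
      exact Or.inl ⟨by rw [hkg']; exact hgf, hkne⟩
    · push_neg at hex
      obtain ⟨m, hmf, hkm⟩ := existsFactorAbove G X k hkG hkX
      have hm0 : m = G₀ := by
        by_contra hne
        exact (hex m hmf hne) hkm
      have hkG₀ : k ≤ G₀ := hm0 ▸ hkm
      have hkH : k ∈ H := by
        by_contra hkH
        exact hkne (hmin k hkG hkH hkG₀)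
      obtain ⟨h, hhf, hkh⟩ := existsFactorAbove H G₀ k hkH hkG₀
      have hhne : h ≠ G₀ := fun e => hG₀H (e ▸ hhf.1)
      have hkh' : k = h := hmax h ⟨hHG hhf.1, hhne⟩ (hhf.2.1.trans hf.2.1) hkh
      exact Or.inr (by rw [hkh']; exact hhf)
  · rintro (⟨hkf, hkne'⟩ | hkB)
    · have hkne : k ≠ G₀ := hkne'
      exact ⟨⟨hkf.1, hkne⟩, hkf.2.1, fun j hj hjX hkj => hkf.2.2 j hj.1 hjX hkj⟩
    · have hkH : k ∈ H := hkB.1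
      have hkG₀ : k ≤ G₀ := hkB.2.1
      have hkne : k ≠ G₀ := fun e => hG₀H (e ▸ hkH)
      refine ⟨⟨hHG hkH, hkne⟩, hkG₀.trans hf.2.1, ?_⟩
      intro j hj hjX hkj
      have hjG : j ∈ G := hj.1
      have hjne : j ≠ G₀ := hj.2
      by_cases hjG₀ : j ≤ G₀
      · have hjH : j ∈ H := by
          by_contra hh
          exact hjne (hmin j hjG hh hjG₀)
        exact hkB.2.2 j hjH hjG₀ hkj
      · obtain ⟨m, hmf, hjm⟩ := existsFactorAbove G X j hjG hjX
        have hmne : m ≠ G₀ := fun e => hjG₀ (e ▸ hjm)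
        have hbot : k = ⊥ := factorsMeet G hG X hX hmf hf hmne (hkj.trans hjm) hkG₀
        exact absurd hbot (hH1 k hkH)

end Stmt10Aux

/-- If `H ⊆ G` are building sets and `G₀` is minimal in `G \ H`,
then `G \ {G₀}` is again a building set, and the factor sets transform as
stated. -/
theorem stmt10 (L : Type*) [SemilatticeInf L] [OrderBot L] [Fintype L]
    (G H : Set L) (hG : IsBuilding L G) (hH : IsBuilding L H) (hHG : H ⊆ G)
    (G₀ : L) (hG₀G : G₀ ∈ G) (hG₀H : G₀ ∉ H)
    (hmin : ∀ g ∈ G, g ∉ H → g ≤ G₀ → g = G₀) :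
    IsBuilding L (G \ {G₀}) ∧
    ∀ X : L, X ≠ ⊥ →
      (G₀ ∉ factorsSet G X → factorsSet (G \ {G₀}) X = factorsSet G X) ∧
      (G₀ ∈ factorsSet G X →
        factorsSet (G \ {G₀}) X = (factorsSet G X \ {G₀}) ∪ factorsSet H G₀) := by
  have hbuild : IsBuilding L (G \ {G₀}) := by
    constructor
    · exact fun g hg => hG.1 g hg.1
    · intro X hX
      by_cases hf : G₀ ∈ factorsSet G X
      · obtain ⟨φ, Pφ⟩ := hG.2 X hX
        obtain ⟨ψ, Pψ⟩ := hH.2 G₀ (hG.1 G₀ hG₀G)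
        exact glue hf hf.2.1
          (eq2 G H hG (fun h hh => hG.1 h (hHG hh)) hHG G₀ hG₀H hmin X hX hf)
          (fun b hbB hbA => hbA.2.2 G₀ hG₀G hf.2.1 hbB.2.1) φ Pφ ψ Pψ
      · rw [eq1 G G₀ hG₀G X hf]
        exact hG.2 X hX
  refine ⟨hbuild, fun X hX => ⟨fun hf => eq1 G G₀ hG₀G X hf,
    fun hf => eq2 G H hG (fun h hh => hG.1 h (hHG hh)) hHG G₀ hG₀H hmin X hX hf⟩⟩
end

section
/- Let L be a finite meet-semilattice and G ⊇ H two building sets in L. Then there exists a chain of building sets G = G_1 ⊇ G_2 ⊇ ... ⊇ G_t = H such that each G_i \ G_{i+1} consists of a single element that is minimal in G_i \ H. -/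
open scoped BigOperators

variable {L : Type*}

section MyAux
set_option linter.unusedSectionVars false
set_option linter.unusedVariables false
variable [PartialOrder L] [OrderBot L]

lemma myFactorsSelf {G : Set L} {g : L} (hg : g ∈ G) : factorsSet G g = {g} := by
  ext x
  constructor
  · rintro ⟨hxG, hxg, hmax⟩
    exact hmax g hg le_rfl hxg
  · rintro rfl
    exact ⟨hg, le_rfl, fun h hh hhg hgh => le_antisymm hgh hhg⟩

lemma myExistsFactor [Finite L] {G : Set L} {X x : L} (hx : x ∈ G) (hxX : x ≤ X) :
    ∃ f ∈ factorsSet G X, x ≤ f := by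
  obtain ⟨m, hm, hmax⟩ := Set.Finite.exists_maximalFor id {y | y ∈ G ∧ y ≤ X ∧ x ≤ y}
    (Set.toFinite _) ⟨x, hx, hxX, le_rfl⟩
  exact ⟨m, ⟨hm.1, hm.2.1, fun h hh hhX hmh => le_antisymm hmh (hmax ⟨hh, hhX, hm.2.2.trans hmh⟩ hmh)⟩, hm.2.2⟩

def iccBot (a : L) : Set.Icc (⊥:L) a := ⟨⊥, le_rfl, bot_le⟩

open Classical in
noncomputable def deltaF {F : Set L} {g : L} (hg : g ∈ F) (z : Set.Icc (⊥:L) g) :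
    (f : F) → Set.Icc (⊥:L) f.1 :=
  fun f => if h : f.1 = g then ⟨z.1, z.2.1, z.2.2.trans (le_of_eq h.symm)⟩ else iccBot f.1

lemma deltaF_self {F : Set L} {g : L} (hg : g ∈ F) (z : Set.Icc (⊥:L) g) :
    deltaF hg z ⟨g, hg⟩ = z := by
  rw [deltaF, dif_pos rfl]

lemma deltaF_ne {F : Set L} {g : L} (hg : g ∈ F) (z : Set.Icc (⊥:L) g) {f : F}
    (hf : f.1 ≠ g) : deltaF hg z f = iccBot f.1 := by
  rw [deltaF, dif_neg hf]

lemma deltaF_mono {F : Set L} {g : L} (hg : g ∈ F) : Monotone (deltaF (L := L) hg) := by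
  intro z z' h f
  simp only [deltaF]
  split_ifs with hf
  · exact h
  · exact le_rfl

section Phi
variable {G : Set L} {X : L}
variable (φ : ((f : factorsSet G X) → Set.Icc (⊥:L) f.1) ≃o Set.Icc (⊥:L) X)

def UnitProp : Prop :=
  ∀ (g : factorsSet G X) (u : (h : factorsSet G X) → Set.Icc (⊥:L) h.1),
    (u g : L) = g.1 → (∀ h, h ≠ g → (u h : L) = (⊥ : L)) → ((φ u : L) = g.1)

lemma phi_bot : φ (fun f => iccBot f.1) = ⟨⊥, le_rfl, bot_le⟩ := by
  apply le_antisymm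
  · have h1 : (fun f : factorsSet G X => iccBot f.1) ≤ φ.symm ⟨⊥, le_rfl, bot_le⟩ :=
      fun f => bot_le
    have h2 := φ.monotone h1
    rwa [OrderIso.apply_symm_apply] at h2
  · exact bot_le

lemma phi_deltaF_top (hφ : UnitProp φ) {g : L} (hg : g ∈ factorsSet G X) :
    φ (deltaF hg ⟨g, bot_le, le_rfl⟩) = ⟨g, bot_le, hg.2.1⟩ := by
  apply Subtype.ext
  apply hφ ⟨g, hg⟩
  · rw [deltaF_self]
  · intro h hne
    have hne' : h.1 ≠ g := fun he => hne (Subtype.ext he)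
    rw [deltaF_ne hg _ hne']
    rfl

lemma phi_deltaF_le (hφ : UnitProp φ) {g : L} (hg : g ∈ factorsSet G X) (z : Set.Icc (⊥:L) g) :
    (φ (deltaF hg z) : L) ≤ g := by
  have h1 : deltaF hg z ≤ deltaF hg ⟨g, bot_le, le_rfl⟩ :=
    deltaF_mono hg (show z ≤ ⟨g, bot_le, le_rfl⟩ from z.2.2)
  have h2 := φ.monotone h1
  rw [phi_deltaF_top φ hφ hg] at h2
  exact h2

noncomputable def sInv {g : L} (hg : g ∈ factorsSet G X) (z : Set.Icc (⊥:L) g) :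
    Set.Icc (⊥:L) g :=
  (φ.symm ⟨z.1, z.2.1, z.2.2.trans hg.2.1⟩) ⟨g, hg⟩

noncomputable def sFwd (hφ : UnitProp φ) {g : L} (hg : g ∈ factorsSet G X) (z : Set.Icc (⊥:L) g) :
    Set.Icc (⊥:L) g :=
  ⟨(φ (deltaF hg z)).1, (φ (deltaF hg z)).2.1, phi_deltaF_le φ hφ hg z⟩

lemma symm_lift_eq (hφ : UnitProp φ) {g : L} (hg : g ∈ factorsSet G X) (z : Set.Icc (⊥:L) g) :
    φ.symm ⟨z.1, z.2.1, z.2.2.trans hg.2.1⟩ = deltaF hg (sInv φ hg z) := by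
  have htop : φ.symm ⟨g, bot_le, hg.2.1⟩ = deltaF hg ⟨g, bot_le, le_rfl⟩ := by
    rw [← phi_deltaF_top φ hφ hg, OrderIso.symm_apply_apply]
  have hle : φ.symm ⟨z.1, z.2.1, z.2.2.trans hg.2.1⟩ ≤ deltaF hg ⟨g, bot_le, le_rfl⟩ := by
    rw [← htop]
    exact φ.symm.monotone (show z.1 ≤ g from z.2.2)
  funext f
  by_cases hf : f.1 = g
  · have hf' : f = ⟨g, hg⟩ := Subtype.ext hf
    subst hf'
    rw [deltaF_self]
    rfl
  · rw [deltaF_ne hg _ hf]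
    have h3 := hle f
    rw [deltaF_ne hg _ hf] at h3
    exact le_antisymm h3 bot_le

lemma sFwd_sInv (hφ : UnitProp φ) {g : L} (hg : g ∈ factorsSet G X) (z : Set.Icc (⊥:L) g) :
    sFwd φ hφ hg (sInv φ hg z) = z := by
  apply Subtype.ext
  show (φ (deltaF hg (sInv φ hg z)) : L) = z.1
  rw [← symm_lift_eq φ hφ hg z, OrderIso.apply_symm_apply]

lemma sInv_sFwd (hφ : UnitProp φ) {g : L} (hg : g ∈ factorsSet G X) (z : Set.Icc (⊥:L) g) :
    sInv φ hg (sFwd φ hφ hg z) = z := by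
  have h1 : (⟨(sFwd φ hφ hg z).1, (sFwd φ hφ hg z).2.1,
      (sFwd φ hφ hg z).2.2.trans hg.2.1⟩ : Set.Icc (⊥:L) X) = φ (deltaF hg z) :=
    Subtype.ext rfl
  have h2 := congrArg (fun v => φ.symm v ⟨g, hg⟩) h1
  simp only [OrderIso.symm_apply_apply] at h2
  rw [deltaF_self] at h2
  exact h2

lemma sInv_mono {g : L} (hg : g ∈ factorsSet G X) : Monotone (sInv φ hg) :=
  fun z z' h =>
    (φ.symm.monotone (show (⟨z.1, z.2.1, z.2.2.trans hg.2.1⟩ : Set.Icc (⊥:L) X)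
      ≤ ⟨z'.1, z'.2.1, z'.2.2.trans hg.2.1⟩ from h)) ⟨g, hg⟩

lemma sFwd_mono (hφ : UnitProp φ) {g : L} (hg : g ∈ factorsSet G X) : Monotone (sFwd φ hφ hg) :=
  fun z z' h => φ.monotone (deltaF_mono hg h)

lemma sInv_bot {g : L} (hg : g ∈ factorsSet G X) : sInv φ hg (iccBot g) = iccBot g := by
  have h1 : (⟨(iccBot g).1, (iccBot g).2.1, (iccBot g).2.2.trans hg.2.1⟩ : Set.Icc (⊥:L) X)
      = φ (fun f => iccBot f.1) := by
    rw [phi_bot φ]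
    exact Subtype.ext rfl
  have h2 := congrArg (fun v => φ.symm v ⟨g, hg⟩) h1
  simp only [OrderIso.symm_apply_apply] at h2
  exact h2

lemma factors_meet_bot (hφ : UnitProp φ) {f1 f2 : L} (hf1 : f1 ∈ factorsSet G X) (hf2 : f2 ∈ factorsSet G X)
    (hne : f1 ≠ f2) {z : L} (h1 : z ≤ f1) (h2 : z ≤ f2) : z = ⊥ := by
  have hzz : z ∈ Set.Icc (⊥:L) X := ⟨bot_le, h1.trans hf1.2.1⟩
  have e1 : φ.symm ⟨z, hzz⟩ ≤ deltaF hf1 ⟨f1, bot_le, le_rfl⟩ := by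
    have := φ.symm.monotone (show (⟨z, hzz⟩ : Set.Icc (⊥:L) X) ≤ φ (deltaF hf1 ⟨f1, bot_le, le_rfl⟩)
      from by rw [phi_deltaF_top φ hφ hf1]; exact h1)
    rwa [OrderIso.symm_apply_apply] at this
  have e2 : φ.symm ⟨z, hzz⟩ ≤ deltaF hf2 ⟨f2, bot_le, le_rfl⟩ := by
    have := φ.symm.monotone (show (⟨z, hzz⟩ : Set.Icc (⊥:L) X) ≤ φ (deltaF hf2 ⟨f2, bot_le, le_rfl⟩)
      from by rw [phi_deltaF_top φ hφ hf2]; exact h2)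
    rwa [OrderIso.symm_apply_apply] at this
  have hv : φ.symm ⟨z, hzz⟩ = fun f : factorsSet G X => iccBot f.1 := by
    funext f
    rcases eq_or_ne f.1 f1 with hf | hf
    · have hf2' : f.1 ≠ f2 := by rw [hf]; exact hne
      have := e2 f
      rw [deltaF_ne hf2 _ hf2'] at this
      exact le_antisymm this bot_le
    · have := e1 f
      rw [deltaF_ne hf1 _ hf] at this
      exact le_antisymm this bot_le
  have hz : (⟨z, hzz⟩ : Set.Icc (⊥:L) X) = ⟨⊥, le_rfl, bot_le⟩ := by
    conv_lhs => rw [← OrderIso.apply_symm_apply φ ⟨z, hzz⟩]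
    rw [hv, phi_bot φ]
  exact congrArg Subtype.val hz


section Compose
variable {G H : Set L} {g X : L}
variable (φ : ((f : factorsSet G X) → Set.Icc (⊥:L) f.1) ≃o Set.Icc (⊥:L) X)
variable (ψ : ((h : factorsSet H g) → Set.Icc (⊥:L) h.1) ≃o Set.Icc (⊥:L) g)
variable (hgF : g ∈ factorsSet G X)
variable (k1 : ∀ f : factorsSet G X, f.1 ≠ g → f.1 ∈ factorsSet (G \ {g}) X)
variable (k2 : ∀ h : factorsSet H g, h.1 ∈ factorsSet (G \ {g}) X)
variable (k3 : ∀ f' : factorsSet (G \ {g}) X, f'.1 ∉ factorsSet H g → f'.1 ∈ factorsSet G X)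
variable (k4 : ∀ f' : factorsSet (G \ {g}) X, f'.1 ≠ g)
variable (k5 : ∀ x, x ∈ factorsSet G X → x ∉ factorsSet H g)

open Classical in
noncomputable def Vmap (u : (f' : factorsSet (G \ {g}) X) → Set.Icc (⊥:L) f'.1) :
    (f : factorsSet G X) → Set.Icc (⊥:L) f.1 :=
  fun f => if hf : f.1 = g then
      ⟨(sInv φ hgF (ψ (fun h => u ⟨h.1, k2 h⟩))).1,
        (sInv φ hgF (ψ (fun h => u ⟨h.1, k2 h⟩))).2.1,
        ((sInv φ hgF (ψ (fun h => u ⟨h.1, k2 h⟩))).2.2).trans (le_of_eq hf.symm)⟩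
    else u ⟨f.1, k1 f hf⟩

open Classical in
noncomputable def Wmap (hφ : UnitProp φ) (y : Set.Icc (⊥:L) X) :
    (f' : factorsSet (G \ {g}) X) → Set.Icc (⊥:L) f'.1 :=
  fun f' => if hf' : f'.1 ∈ factorsSet H g then
      ψ.symm (sFwd φ hφ hgF ((φ.symm y) ⟨g, hgF⟩)) ⟨f'.1, hf'⟩
    else (φ.symm y) ⟨f'.1, k3 f' hf'⟩

lemma Vmap_self (u : (f' : factorsSet (G \ {g}) X) → Set.Icc (⊥:L) f'.1) :
    Vmap φ ψ hgF k1 k2 u ⟨g, hgF⟩ = sInv φ hgF (ψ (fun h => u ⟨h.1, k2 h⟩)) := by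
  rw [Vmap, dif_pos rfl]

lemma Vmap_ne (u : (f' : factorsSet (G \ {g}) X) → Set.Icc (⊥:L) f'.1)
    {f : factorsSet G X} (hf : f.1 ≠ g) :
    Vmap φ ψ hgF k1 k2 u f = u ⟨f.1, k1 f hf⟩ := by
  rw [Vmap, dif_neg hf]

lemma Vmap_mono : Monotone (Vmap φ ψ hgF k1 k2) := by
  intro u u' huu f
  simp only [Vmap]
  split_ifs with hf
  · exact sInv_mono φ hgF (ψ.monotone (fun h => huu _))
  · exact huu _

lemma Wmap_mono (hφ : UnitProp φ) : Monotone (Wmap φ ψ hgF k3 hφ) := by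
  intro y y' hyy f'
  simp only [Wmap]
  split_ifs with hf'
  · exact ψ.symm.monotone (sFwd_mono φ hφ hgF ((φ.symm.monotone hyy) ⟨g, hgF⟩)) ⟨f'.1, hf'⟩
  · exact (φ.symm.monotone hyy) _

include k4 in
lemma WV_id (hφ : UnitProp φ)
    (u : (f' : factorsSet (G \ {g}) X) → Set.Icc (⊥:L) f'.1) :
    Wmap φ ψ hgF k3 hφ (φ (Vmap φ ψ hgF k1 k2 u)) = u := by
  funext f'
  have hsymm : φ.symm (φ (Vmap φ ψ hgF k1 k2 u)) = Vmap φ ψ hgF k1 k2 u :=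
    OrderIso.symm_apply_apply φ _
  simp only [Wmap, hsymm]
  split_ifs with hf'
  · have h1 : Vmap φ ψ hgF k1 k2 u ⟨g, hgF⟩ = sInv φ hgF (ψ (fun h => u ⟨h.1, k2 h⟩)) :=
      Vmap_self φ ψ hgF k1 k2 u
    rw [h1, sFwd_sInv φ hφ hgF, OrderIso.symm_apply_apply]
  · rw [Vmap_ne φ ψ hgF k1 k2 _ (k4 f')]

include k5 in
lemma VW_id (hφ : UnitProp φ) (y : Set.Icc (⊥:L) X) :
    φ (Vmap φ ψ hgF k1 k2 (Wmap φ ψ hgF k3 hφ y)) = y := by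
  have hV : Vmap φ ψ hgF k1 k2 (Wmap φ ψ hgF k3 hφ y) = φ.symm y := by
    funext f
    by_cases hf : f.1 = g
    · have hf2 : f = ⟨g, hgF⟩ := Subtype.ext hf
      subst hf2
      rw [Vmap_self φ ψ hgF k1 k2]
      have hres : (fun h : factorsSet H g => Wmap φ ψ hgF k3 hφ y ⟨h.1, k2 h⟩)
          = ψ.symm (sFwd φ hφ hgF ((φ.symm y) ⟨g, hgF⟩)) := by
        funext h
        simp only [Wmap]
        rw [dif_pos h.2]
      rw [hres, OrderIso.apply_symm_apply, sInv_sFwd φ hφ hgF]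
    · rw [Vmap_ne φ ψ hgF k1 k2 _ hf]
      simp only [Wmap]
      rw [dif_neg (k5 f.1 f.2)]
  rw [hV, OrderIso.apply_symm_apply]

include k3 k4 k5 in
lemma unit_new (hφ : UnitProp φ) (hψ : UnitProp ψ)
    (g0 : factorsSet (G \ {g}) X)
    (u : (h : factorsSet (G \ {g}) X) → Set.Icc (⊥:L) h.1)
    (hu1 : (u g0 : L) = g0.1) (hu2 : ∀ h, h ≠ g0 → (u h : L) = (⊥ : L)) :
    (φ (Vmap φ ψ hgF k1 k2 u) : L) = g0.1 := by
  by_cases hmem : g0.1 ∈ factorsSet H g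
  · have hg0g : g0.1 ≤ g := hmem.2.1
    have hpsi : ψ (fun h => u ⟨h.1, k2 h⟩) = ⟨g0.1, bot_le, hg0g⟩ := by
      apply Subtype.ext
      apply hψ ⟨g0.1, hmem⟩
      · exact hu1
      · intro h hne
        apply hu2
        intro he
        have h1 : h.1 = g0.1 := Subtype.ext_iff.mp he
        exact hne (Subtype.ext h1)
    have hVu : Vmap φ ψ hgF k1 k2 u
        = φ.symm ⟨g0.1, bot_le, hg0g.trans hgF.2.1⟩ := by
      rw [symm_lift_eq φ hφ hgF (⟨g0.1, bot_le, hg0g⟩ : Set.Icc (⊥:L) g)]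
      funext f
      by_cases hf : f.1 = g
      · have hf2 : f = ⟨g, hgF⟩ := Subtype.ext hf
        subst hf2
        rw [Vmap_self φ ψ hgF k1 k2, hpsi, deltaF_self]
      · rw [Vmap_ne φ ψ hgF k1 k2 _ hf, deltaF_ne hgF _ hf]
        apply Subtype.ext
        apply hu2
        intro he
        have h1 : f.1 = g0.1 := congrArg Subtype.val he
        exact k5 f.1 f.2 (h1 ▸ hmem)
    rw [hVu, OrderIso.apply_symm_apply]
  · have hmemF : g0.1 ∈ factorsSet G X := k3 g0 hmem
    have hneg : g0.1 ≠ g := k4 g0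
    apply hφ ⟨g0.1, hmemF⟩
    · rw [Vmap_ne φ ψ hgF k1 k2 _ hneg]
      exact hu1
    · intro f hne
      by_cases hf : f.1 = g
      · have hf2 : f = ⟨g, hgF⟩ := Subtype.ext hf
        subst hf2
        rw [Vmap_self φ ψ hgF k1 k2]
        have hres : (fun h : factorsSet H g => u ⟨h.1, k2 h⟩)
            = fun h : factorsSet H g => iccBot h.1 := by
          funext h
          apply Subtype.ext
          apply hu2
          intro he
          have h1 : h.1 = g0.1 := congrArg Subtype.val he
          exact hmem (h1 ▸ h.2)
        rw [hres, phi_bot ψ]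
        exact congrArg Subtype.val (sInv_bot φ hgF)
      · rw [Vmap_ne φ ψ hgF k1 k2 _ hf]
        apply hu2
        intro he
        have h1 : f.1 = g0.1 := Subtype.ext_iff.mp he
        exact hne (Subtype.ext h1)

end Compose

section RM
variable [PartialOrder L] [OrderBot L]
set_option linter.unusedSectionVars false

lemma removeMin [Finite L] {G H : Set L} (hG : IsBuilding L G) (hH : IsBuilding L H)
    (hHG : H ⊆ G) {g : L} (hgG : g ∈ G) (hgH : g ∉ H)
    (hmin : ∀ x ∈ G, x ∉ H → x ≤ g → x = g) :
    IsBuilding L (G \ {g}) := by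
  constructor
  · exact fun x hx => hG.1 x hx.1
  intro X hX
  by_cases hgF : g ∈ factorsSet G X
  · -- g is a factor of X : replace it by the H-factors of g
    obtain ⟨φ, hφ⟩ := hG.2 X hX
    have hgbot : g ≠ ⊥ := hG.1 g hgG
    obtain ⟨ψ, hψ⟩ := hH.2 g hgbot
    have hgX : g ≤ X := hgF.2.1
    have hGH' : ∀ x, x ∈ G \ {g} → x ≤ g → x ∈ H := by
      rintro x ⟨hxG, hxg⟩ hxle
      by_contra hxH
      exact hxg (hmin x hxG hxH hxle)
    have k5 : ∀ x, x ∈ factorsSet G X → x ∉ factorsSet H g := by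
      intro x hx hx'
      have hxne : x ≠ g := fun he => hgH (he ▸ hx'.1)
      exact hxne (hx.2.2 g hgG hgX hx'.2.1)
    have k1 : ∀ f : factorsSet G X, f.1 ≠ g → f.1 ∈ factorsSet (G \ {g}) X := by
      rintro ⟨x, hxG, hxX, hmax⟩ hxg
      exact ⟨⟨hxG, hxg⟩, hxX, fun h hh hhX hxh => hmax h hh.1 hhX hxh⟩
    have k2 : ∀ h : factorsSet H g, h.1 ∈ factorsSet (G \ {g}) X := by
      rintro ⟨x, hx⟩
      have hxH : x ∈ H := hx.1
      have hxg : x ≤ g := hx.2.1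
      have hxne : x ≠ g := fun he => hgH (he ▸ hxH)
      refine ⟨⟨hHG hxH, hxne⟩, hxg.trans hgX, ?_⟩
      intro y hy hyX hxy
      obtain ⟨f', hf', hyf'⟩ := myExistsFactor hy.1 hyX
      by_cases hf'g : f' = g
      · have hyg : y ≤ g := hf'g ▸ hyf'
        have hyH : y ∈ H := hGH' y hy hyg
        obtain ⟨h', hh', hyh'⟩ := myExistsFactor hyH hyg
        have hxh' : x = h' := hx.2.2 h' hh'.1 hh'.2.1 (hxy.trans hyh')
        exact le_antisymm hxy (hxh' ▸ hyh')
      · exfalso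
        have hbot : x = ⊥ := factors_meet_bot φ hφ hf' hgF hf'g (hxy.trans hyf') hxg
        exact hH.1 x hxH hbot
    have k4 : ∀ f' : factorsSet (G \ {g}) X, f'.1 ≠ g := fun f' he => f'.2.1.2 he
    have k3 : ∀ f' : factorsSet (G \ {g}) X, f'.1 ∉ factorsSet H g →
        f'.1 ∈ factorsSet G X := by
      rintro ⟨x, ⟨hxG, hxg⟩, hxX, hmax⟩ hnot
      obtain ⟨f', hf', hxf'⟩ := myExistsFactor hxG hxX
      by_cases hf'g : f' = g
      · exfalso
        have hxg2 : x ≤ g := hf'g ▸ hxf'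
        have hxH : x ∈ H := hGH' x ⟨hxG, hxg⟩ hxg2
        obtain ⟨h', hh', hxh'⟩ := myExistsFactor hxH hxg2
        have hne' : h' ≠ g := fun he => hgH (he ▸ hh'.1)
        have hx' : x = h' := hmax h' ⟨hHG hh'.1, hne'⟩ (hh'.2.1.trans hgX) hxh'
        exact hnot (hx' ▸ hh')
      · have hf'G' : f' ∈ G \ {g} := ⟨hf'.1, hf'g⟩
        have hx' : x = f' := hmax f' hf'G' hf'.2.1 hxf'
        exact hx' ▸ hf'
    refine ⟨Equiv.toOrderIso
      ⟨fun u => φ (Vmap φ ψ hgF k1 k2 u), Wmap φ ψ hgF k3 hφ,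
        WV_id φ ψ hgF k1 k2 k3 k4 hφ, VW_id φ ψ hgF k1 k2 k3 k5 hφ⟩
      (fun u u' huu => φ.monotone (Vmap_mono φ ψ hgF k1 k2 huu))
      (Wmap_mono φ ψ hgF k3 hφ), ?_⟩
    intro g0 u hu1 hu2
    exact unit_new φ ψ hgF k1 k2 k3 k4 k5 hφ hψ g0 u hu1 hu2
  · -- g is not a factor of X : the factors are unchanged
    have hEq : factorsSet (G \ {g}) X = factorsSet G X := by
      ext x
      constructor
      · rintro ⟨⟨hxG, hxg⟩, hxX, hmax⟩
        refine ⟨hxG, hxX, fun h hh hhX hxh => ?_⟩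
        by_cases hhg : h = g
        · exfalso
          have hxh2 : x ≤ g := hhg ▸ hxh
          have hhX2 : g ≤ X := hhg ▸ hhX
          have hnot : ¬ ∀ h' ∈ G, h' ≤ X → g ≤ h' → g = h' :=
            fun hall => hgF ⟨hgG, hhX2, hall⟩
          push_neg at hnot
          obtain ⟨h', hh'G, hh'X, hgh', hne⟩ := hnot
          have hx' : x = h' := hmax h' ⟨hh'G, fun he => hne he.symm⟩ hh'X (hxh2.trans hgh')
          exact hxg (le_antisymm hxh2 (hgh'.trans (le_of_eq hx'.symm)))
        · exact hmax h ⟨hh, hhg⟩ hhX hxh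
      · rintro ⟨hxG, hxX, hmax⟩
        have hxg : x ≠ g := fun he => hgF (he ▸ ⟨hxG, hxX, hmax⟩)
        exact ⟨⟨hxG, hxg⟩, hxX, fun h hh hhX hxh => hmax h hh.1 hhX hxh⟩
    rw [hEq]
    exact hG.2 X hX

end RM

lemma chainStep {L : Type*} [PartialOrder L] [OrderBot L] [Finite L]
    (H : Set L) (hH : IsBuilding L H) :
    ∀ n : ℕ, ∀ G : Set L, IsBuilding L G → H ⊆ G → (G \ H).ncard ≤ n →
    ∃ t : ℕ, ∃ c : ℕ → Set L,
      c 0 = G ∧ c t = H ∧ (∀ i ≤ t, IsBuilding L (c i)) ∧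
      ∀ i < t, c (i + 1) ⊆ c i ∧
        ∃ g : L, c i \ c (i + 1) = {g} ∧ g ∈ c i ∧ g ∉ H ∧
          ∀ x ∈ c i, x ∉ H → x ≤ g → x = g := by
  intro n
  induction n with
  | zero =>
    intro G hG hHG hcard
    have hempty : G \ H = ∅ :=
      (Set.ncard_eq_zero (Set.toFinite _)).mp (Nat.le_zero.mp hcard)
    have hGH : G = H := Set.Subset.antisymm (Set.diff_eq_empty.mp hempty) hHG
    exact ⟨0, fun _ => G, rfl, hGH, fun i _ => hG, fun i hi => absurd hi (Nat.not_lt_zero i)⟩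
  | succ n ih =>
    intro G hG hHG hcard
    by_cases hGH : G = H
    · exact ⟨0, fun _ => G, rfl, hGH, fun i _ => hG, fun i hi => absurd hi (Nat.not_lt_zero i)⟩
    · have hne : (G \ H).Nonempty := by
        rw [Set.diff_nonempty]
        exact fun hsub => hGH (Set.Subset.antisymm hsub hHG)
      obtain ⟨g, hgGH, hgmin⟩ :=
        Set.Finite.exists_minimalFor id (G \ H) (Set.toFinite _) hne
      have hgG : g ∈ G := hgGH.1
      have hgH : g ∉ H := hgGH.2
      have hmin : ∀ x ∈ G, x ∉ H → x ≤ g → x = g :=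
        fun x hxG hxH hxg => le_antisymm hxg (hgmin ⟨hxG, hxH⟩ hxg)
      have hG₂ : IsBuilding L (G \ {g}) := removeMin hG hH hHG hgG hgH hmin
      have hHG₂ : H ⊆ G \ {g} := fun x hx => ⟨hHG hx, fun he => hgH (he ▸ hx)⟩
      have hcard₂ : ((G \ {g}) \ H).ncard ≤ n := by
        have h1 : (G \ {g}) \ H = (G \ H) \ {g} := Set.diff_diff_comm
        rw [h1]
        have h2 := Set.ncard_diff_singleton_lt_of_mem hgGH (Set.toFinite _)
        omega
      obtain ⟨t, c, hc0, hct, hbuild, hstep⟩ := ih (G \ {g}) hG₂ hHG₂ hcard₂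
      refine ⟨t + 1, fun i => if i = 0 then G else c (i - 1), if_pos rfl, ?_, ?_, ?_⟩
      · beta_reduce
        rw [if_neg (by omega : t + 1 ≠ 0)]
        simpa using hct
      · intro i hi
        beta_reduce
        by_cases hi0 : i = 0
        · rw [hi0, if_pos rfl]; exact hG
        · rw [if_neg hi0]
          exact hbuild (i - 1) (by omega)
      · intro i hi
        beta_reduce
        by_cases hi0 : i = 0
        · subst hi0
          rw [if_neg (by omega : (0:ℕ) + 1 ≠ 0), if_pos rfl]
          simp only [Nat.add_sub_cancel]
          rw [hc0]
          refine ⟨Set.diff_subset, g, ?_, hgG, hgH, hmin⟩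
          ext x
          constructor
          · rintro ⟨hxG, hx2⟩
            by_contra hxg
            exact hx2 ⟨hxG, hxg⟩
          · rintro rfl
            exact ⟨hgG, fun hc => hc.2 rfl⟩
        · rw [if_neg (by omega : i + 1 ≠ 0), if_neg hi0]
          have h1 : i + 1 - 1 = (i - 1) + 1 := by omega
          rw [h1]
          exact hstep (i - 1) (by omega)


/-- For building sets `G ⊇ H` there is a chain of building sets
`G = G₁ ⊇ ... ⊇ G_t = H` with each consecutive difference a single element,
minimal in `Gᵢ \ H`. -/
theorem stmt11 (L : Type*) [SemilatticeInf L] [OrderBot L] [Fintype L]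
    (G H : Set L) (hG : IsBuilding L G) (hH : IsBuilding L H) (hHG : H ⊆ G) :
    ∃ t : ℕ, ∃ c : ℕ → Set L,
      c 0 = G ∧ c t = H ∧ (∀ i ≤ t, IsBuilding L (c i)) ∧
      ∀ i < t, c (i + 1) ⊆ c i ∧
        ∃ g : L, c i \ c (i + 1) = {g} ∧ g ∈ c i ∧ g ∉ H ∧
          ∀ x ∈ c i, x ∉ H → x ≤ g → x = g :=
  chainStep H hH ((G \ H).ncard) G hG hHG le_rfl
end Phi
end MyAux
end

section
/- Let L be a finite meet-semilattice, G a building set in L, and H = G \ {G₀} also a building set (with G₀ ∈ G minimal in G \ H). If S is a G-nested set with G₀ ∈ S, then (S \ {G₀}) ∪ F_H(G₀) is H-nested. -/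
open scoped BigOperators

variable {L : Type*}

/-- In a finite meet-semilattice, any nonempty set with an upper bound has a LUB. -/
lemma exists_lub_of_ub {L : Type*} [SemilatticeInf L] [Fintype L]
    (A : Set L) (k : L) (hk : k ∈ upperBounds A) :
    ∃ j, IsLUB A j := by
  classical
  set U : Finset L := Finset.univ.filter (fun y => ∀ a ∈ A, a ≤ y) with hU
  have hkU : k ∈ U := by
    simp only [hU, Finset.mem_filter, Finset.mem_univ, true_and]
    exact fun a ha => hk ha
  have hUne : U.Nonempty := ⟨k, hkU⟩
  refine ⟨U.inf' hUne id, ?_, ?_⟩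
  · intro a ha
    refine Finset.le_inf' _ _ (fun y hy => ?_)
    simp only [hU, Finset.mem_filter, Finset.mem_univ, true_and] at hy
    exact hy a ha
  · intro y hy
    refine Finset.inf'_le _ ?_
    simp only [hU, Finset.mem_filter, Finset.mem_univ, true_and]
    exact fun a ha => hy ha

/-- In a finite poset, any element of `G` below `k` lies below some `G`-factor of `k`. -/
lemma exists_factor_above {L : Type*} [PartialOrder L] [Fintype L]
    (G : Set L) (k g : L) (hg : g ∈ G) (hgk : g ≤ k) :
    ∃ p ∈ factorsSet G k, g ≤ p := by
  classical
  set T : Finset L := Finset.univ.filter (fun h => h ∈ G ∧ h ≤ k ∧ g ≤ h) with hT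
  have hgT : g ∈ T := by
    simp only [hT, Finset.mem_filter, Finset.mem_univ, true_and]
    exact ⟨hg, hgk, le_rfl⟩
  obtain ⟨p, hpT, hmax⟩ := T.exists_maximal ⟨g, hgT⟩
  simp only [hT, Finset.mem_filter, Finset.mem_univ, true_and] at hpT
  refine ⟨p, ⟨hpT.1, hpT.2.1, ?_⟩, hpT.2.2⟩
  intro h hh hhk hph
  by_contra hne
  refine hne (le_antisymm hph (hmax ?_ hph))
  simp only [hT, Finset.mem_filter, Finset.mem_univ, true_and]
  exact ⟨hh, hhk, le_trans hpT.2.2 hph⟩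

/-- Distinct factors of a building set have meet `⊥`. -/
lemma factors_inf_bot {L : Type*} [SemilatticeInf L] [OrderBot L]
    (G : Set L) (hG : IsBuilding L G) (k : L) (hk : k ≠ ⊥)
    (p q : L) (hp : p ∈ factorsSet G k) (hq : q ∈ factorsSet G k) (hpq : p ≠ q) :
    p ⊓ q = ⊥ := by
  classical
  obtain ⟨φ, hφ⟩ := hG.2 k hk
  have hpk : p ≤ k := hp.2.1
  set ep : (h : factorsSet G k) → Set.Icc (⊥ : L) h.1 :=
    fun h => if h.1 = p then ⟨h.1, bot_le, le_rfl⟩ else ⟨⊥, le_rfl, bot_le⟩ with hepdef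
  set eq' : (h : factorsSet G k) → Set.Icc (⊥ : L) h.1 :=
    fun h => if h.1 = q then ⟨h.1, bot_le, le_rfl⟩ else ⟨⊥, le_rfl, bot_le⟩ with heqdef
  have hep : ((φ ep : Set.Icc (⊥ : L) k) : L) = p := by
    refine hφ ⟨p, hp⟩ ep ?_ ?_
    · simp [hepdef]
    · intro h hne
      have h1 : h.1 ≠ p := fun hh => hne (Subtype.ext hh)
      simp [hepdef, h1]
  have heq : ((φ eq' : Set.Icc (⊥ : L) k) : L) = q := by
    refine hφ ⟨q, hq⟩ eq' ?_ ?_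
    · simp [heqdef]
    · intro h hne
      have h1 : h.1 ≠ q := fun hh => hne (Subtype.ext hh)
      simp [heqdef, h1]
  have hpqmem : p ⊓ q ∈ Set.Icc (⊥ : L) k := ⟨bot_le, le_trans inf_le_left hpk⟩
  set m := φ.symm ⟨p ⊓ q, hpqmem⟩ with hmdef
  have hmp : m ≤ ep := by
    have h1 : φ m ≤ φ ep := by
      rw [hmdef, OrderIso.apply_symm_apply]
      rw [← Subtype.coe_le_coe, hep]
      exact inf_le_left
    exact φ.le_iff_le.mp h1
  have hmq : m ≤ eq' := by
    have h1 : φ m ≤ φ eq' := by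
      rw [hmdef, OrderIso.apply_symm_apply]
      rw [← Subtype.coe_le_coe, heq]
      exact inf_le_right
    exact φ.le_iff_le.mp h1
  have hmbot : ∀ h, ((m h : L)) = ⊥ := by
    intro h
    by_cases hh : h.1 = p
    · have h2 : (m h : L) ≤ (eq' h : L) := Subtype.coe_le_coe.mpr (hmq h)
      have h3 : ((eq' h : L)) = ⊥ := by
        have h1 : h.1 ≠ q := fun hhq => hpq (hh ▸ hhq)
        simp [heqdef, h1]
      rw [h3] at h2
      exact le_bot_iff.mp h2
    · have h2 : (m h : L) ≤ (ep h : L) := Subtype.coe_le_coe.mpr (hmp h)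
      have h3 : ((ep h : L)) = ⊥ := by simp [hepdef, hh]
      rw [h3] at h2
      exact le_bot_iff.mp h2
  set z : (h : factorsSet G k) → Set.Icc (⊥ : L) h.1 :=
    fun h => ⟨⊥, le_rfl, bot_le⟩ with hzdef
  have hmz : m = z := funext fun h => Subtype.ext (hmbot h)
  have hbotmem : (⊥ : L) ∈ Set.Icc (⊥ : L) k := ⟨le_rfl, bot_le⟩
  have hzw : z ≤ φ.symm ⟨⊥, hbotmem⟩ := by
    intro h
    exact Subtype.coe_le_coe.mp (bot_le : (⊥ : L) ≤ _)
  have hzbot : ((φ z : Set.Icc (⊥ : L) k) : L) ≤ ⊥ := by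
    have h1 : φ z ≤ φ (φ.symm ⟨⊥, hbotmem⟩) := φ.le_iff_le.mpr hzw
    rw [OrderIso.apply_symm_apply] at h1
    exact Subtype.coe_le_coe.mpr h1
  have hφm : ((φ m : Set.Icc (⊥ : L) k) : L) = p ⊓ q := by
    rw [hmdef, OrderIso.apply_symm_apply]
  rw [hmz] at hφm
  rw [hφm] at hzbot
  exact le_bot_iff.mp hzbot

/-- If `H = G \ {G₀}` is also a building set and `S` is `G`-nested
with `G₀ ∈ S`, then `(S \ {G₀}) ∪ F_H(G₀)` is `H`-nested. -/
theorem stmt12 (L : Type*) [SemilatticeInf L] [OrderBot L] [Fintype L] [DecidableEq L]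
    (G : Set L) (G₀ : L) (hG : IsBuilding L G) (hG₀ : G₀ ∈ G)
    (hH : IsBuilding L (G \ {G₀}))
    (F : Finset L) (hF : (F : Set L) = factorsSet (G \ {G₀}) G₀)
    (S : Finset L) (hS : IsNested G S) (hmem : G₀ ∈ S) :
    IsNested (G \ {G₀}) (S.erase G₀ ∪ F) := by
  classical
  obtain ⟨hSsub, hSnest⟩ := hS
  have hFfac : ∀ x ∈ F, x ∈ factorsSet (G \ {G₀}) G₀ := by
    intro x hx
    have : x ∈ (F : Set L) := hx
    rwa [hF] at this
  have hHsub : ∀ x ∈ (S.erase G₀ ∪ F), x ∈ G \ {G₀} := by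
    intro x hx
    rcases Finset.mem_union.mp hx with h | h
    · exact ⟨hSsub (Finset.mem_of_mem_erase h), Finset.ne_of_mem_erase h⟩
    · exact (hFfac x h).1
  refine ⟨fun x hx => hHsub x hx, ?_⟩
  intro A hA hanti hcard
  by_cases hAF : ∃ a₀ ∈ A, a₀ ∈ F
  · -- there is a factor in A
    obtain ⟨a₀, ha₀A, ha₀F⟩ := hAF
    have ha₀fac := hFfac a₀ ha₀F
    have ha₀H : a₀ ∈ G \ {G₀} := ha₀fac.1
    have ha₀le : a₀ ≤ G₀ := ha₀fac.2.1
    have ha₀lt : a₀ < G₀ := lt_of_le_of_ne ha₀le ha₀H.2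
    have hbotG : ∀ g ∈ G, g ≠ ⊥ := hG.1
    have hG₀bot : G₀ ≠ ⊥ := hbotG G₀ hG₀
    have hAH : ∀ a ∈ A, a ∈ G \ {G₀} := fun a ha => hHsub a (hA ha)
    set Arest : Finset L := A.filter (fun a => ¬ a ≤ G₀) with hArest
    have hrest : ∀ a ∈ Arest, ¬ a ≤ G₀ ∧ ¬ G₀ ≤ a := by
      intro a ha
      have haA := Finset.mem_filter.mp ha
      refine ⟨haA.2, fun hle => ?_⟩
      have hne : a₀ ≠ a := fun h => haA.2 (h ▸ ha₀le)
      exact hanti ha₀A haA.1 hne (le_trans ha₀lt.le hle)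
    rcases Finset.eq_empty_or_nonempty Arest with hre | hre
    · -- Case (i): every element of A is ≤ G₀
      have hallle : ∀ a ∈ A, a ≤ G₀ := by
        intro a ha
        by_contra hno
        have : a ∈ Arest := Finset.mem_filter.mpr ⟨ha, hno⟩
        rw [hre] at this
        exact absurd this (Finset.notMem_empty a)
      have hub : G₀ ∈ upperBounds (A : Set L) := fun a ha => hallle a ha
      obtain ⟨j, hj⟩ := exists_lub_of_ub (A : Set L) G₀ hub
      refine ⟨j, hj, ?_⟩
      intro hjH
      have hjle : j ≤ G₀ := hj.2 hub
      obtain ⟨f', hf', hjf'⟩ := exists_factor_above (G \ {G₀}) G₀ j hjH hjle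
      have ha₀j : a₀ ≤ j := hj.1 ha₀A
      have ha₀eq : a₀ = f' := ha₀fac.2.2 f' hf'.1 hf'.2.1 (le_trans ha₀j hjf')
      have h1c : 1 < A.card := by omega
      obtain ⟨a₁, ha₁A, ha₁ne⟩ := Finset.exists_mem_ne h1c a₀
      have ha₁le : a₁ ≤ a₀ := by
        rw [ha₀eq]
        exact le_trans (hj.1 ha₁A) hjf'
      exact hanti ha₁A ha₀A ha₁ne ha₁le
    · -- Case (ii): Arest nonempty
      set B : Finset L := insert G₀ Arest with hB
      have hBS : B ⊆ S := by
        intro b hb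
        rcases Finset.mem_insert.mp hb with rfl | hb
        · exact hmem
        · have hbA := Finset.mem_filter.mp hb
          rcases Finset.mem_union.mp (hA hbA.1) with h | h
          · exact Finset.mem_of_mem_erase h
          · exact absurd (hFfac b h).2.1 hbA.2
      have hBanti : IsAntichain (· ≤ ·) (B : Set L) := by
        intro x hx y hy hxy hle
        simp only [hB, Finset.coe_insert, Set.mem_insert_iff, Finset.mem_coe] at hx hy
        rcases hx with rfl | hx
        · rcases hy with rfl | hy
          · exact hxy rfl
          · exact (hrest y hy).2 hle
        · rcases hy with rfl | hy
          · exact (hrest x hx).1 hle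
          · exact hanti (Finset.mem_of_mem_filter x hx) (Finset.mem_of_mem_filter y hy) hxy hle
      have hG₀notA : G₀ ∉ Arest := by
        intro h
        exact (hrest G₀ h).1 le_rfl
      have hcardB : 2 ≤ B.card := by
        rw [hB, Finset.card_insert_of_notMem hG₀notA]
        have := Finset.card_pos.mpr hre
        omega
      obtain ⟨k, hk, hkG⟩ := hSnest B hBS hBanti hcardB
      have hG₀k : G₀ ≤ k := hk.1 (Finset.mem_insert_self _ _)
      have hub : k ∈ upperBounds (A : Set L) := by
        intro a ha
        by_cases hle : a ≤ G₀
        · exact le_trans hle hG₀k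
        · exact hk.1 (Finset.mem_insert_of_mem (Finset.mem_filter.mpr ⟨ha, hle⟩))
      obtain ⟨j, hj⟩ := exists_lub_of_ub (A : Set L) k hub
      refine ⟨j, hj, ?_⟩
      intro hjH
      have hjk : j ≤ k := hj.2 hub
      have hlub2 : IsLUB {j, G₀} k := by
        constructor
        · rintro y hy
          rcases hy with rfl | hy
          · exact hjk
          · rw [Set.mem_singleton_iff] at hy
            exact hy ▸ hG₀k
        · intro y hy
          have hyj : j ≤ y := hy (Set.mem_insert _ _)
          have hyG₀ : G₀ ≤ y := hy (Set.mem_insert_of_mem _ rfl)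
          refine hk.2 ?_
          intro b hb
          rcases Finset.mem_insert.mp hb with rfl | hb
          · exact hyG₀
          · exact le_trans (hj.1 (Finset.mem_of_mem_filter b hb)) hyj
      have hkbot : k ≠ ⊥ := by
        intro h
        exact hG₀bot (le_bot_iff.mp (h ▸ hG₀k))
      obtain ⟨p, hp, hG₀p⟩ := exists_factor_above G k G₀ hG₀ hG₀k
      obtain ⟨q, hq, hjq⟩ := exists_factor_above G k j hjH.1 hjk
      have hpq : p = q := by
        by_contra hne
        have hmeet := factors_inf_bot G hG k hkbot p q hp hq hne
        have ha₀p : a₀ ≤ p := le_trans ha₀le hG₀p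
        have ha₀q : a₀ ≤ q := le_trans (hj.1 ha₀A) hjq
        have : a₀ ≤ ⊥ := hmeet ▸ le_inf ha₀p ha₀q
        exact hbotG a₀ ha₀H.1 (le_bot_iff.mp this)
      have hqub : q ∈ upperBounds ({j, G₀} : Set L) := by
        rintro y hy
        rcases hy with rfl | hy
        · exact hjq
        · rw [Set.mem_singleton_iff] at hy
          exact hy ▸ (hpq ▸ hG₀p)
      have hkq : k ≤ q := hlub2.2 hqub
      have hqk : q ≤ k := hq.2.1
      exact hkG (le_antisymm hkq hqk ▸ hq.1)
  · -- A contains no factor: A ⊆ S, use G-nestedness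
    push_neg at hAF
    have hAS : A ⊆ S := by
      intro a ha
      rcases Finset.mem_union.mp (hA ha) with h | h
      · exact Finset.mem_of_mem_erase h
      · exact absurd h (hAF a ha)
    obtain ⟨j, hj, hjG⟩ := hSnest A hAS hanti hcard
    exact ⟨j, hj, fun hjH => hjG hjH.1⟩
end

section
/- Let L be a finite meet-semilattice, G a building set in L, and H = G \ {G₀} also a building set, with G₀ minimal in G \ H. If S' is H-nested, F_H(G₀) ⊄ S', and S' ∪ F_H(G₀) is H-nested, then S' ∪ {G₀} is G-nested. -/
open scoped BigOperators

variable {L : Type*}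

section Aux13
variable [SemilatticeInf L] [OrderBot L] [Fintype L]

lemma cover_lemma (H : Set L) (G₀ : L) {a : L} (ha : a ∈ H) (haG : a ≤ G₀) :
    ∃ f ∈ factorsSet H G₀, a ≤ f := by
  classical
  obtain ⟨b, hab, hb⟩ := Finset.exists_le_maximal
    (Finset.univ.filter (fun h => h ∈ H ∧ h ≤ G₀)) (show a ∈ _ by simp [ha, haG])
  have hb1 : b ∈ H ∧ b ≤ G₀ := by simpa using hb.1
  refine ⟨b, ⟨hb1.1, hb1.2, ?_⟩, hab⟩
  intro h hh hhG hbh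
  exact le_antisymm hbh (hb.2 (by simp [hh, hhG]) hbh)

section Build

variable (H : Set L) (G₀ : L) (hb : G₀ ≠ ⊥) (hH : IsBuilding L H)
include hb hH

/-- G₀ is the LUB of its factors. -/
lemma lub_factors : IsLUB (factorsSet H G₀) G₀ := by
  classical
  obtain ⟨φ, hφ⟩ := hH.2 G₀ hb
  -- unit vectors
  set E : (factorsSet H G₀) → ((g : (factorsSet H G₀)) → Set.Icc (⊥ : L) g.1) := fun k h =>
    if hh : h = k then ⟨h.1, by simp⟩ else ⟨⊥, by simp⟩ with hEdef
  have hE : ∀ k : (factorsSet H G₀), ((φ (E k) : L)) = k.1 := by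
    intro k
    refine hφ k (E k) (by simp [hEdef]) (fun h hh => by simp [hEdef, hh])
  set tv : (g : (factorsSet H G₀)) → Set.Icc (⊥ : L) g.1 := fun h => ⟨h.1, by simp⟩ with htv
  have hTop : ((φ tv : L)) = G₀ := by
    refine le_antisymm (φ tv).2.2 ?_
    have h1 : φ.symm ⟨G₀, by simp⟩ ≤ tv := fun h => (φ.symm ⟨G₀, by simp⟩ h).2.2
    have := φ.monotone h1
    rw [OrderIso.apply_symm_apply] at this
    exact this
  constructor
  · intro x hx; exact hx.2.1
  · intro u hu
    set w := u ⊓ G₀ with hw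
    have hwmem : w ∈ Set.Icc (⊥:L) G₀ := by simp [hw]
    have hall : ∀ k : (factorsSet H G₀), E k ≤ φ.symm ⟨w, hwmem⟩ := by
      intro k
      rw [OrderIso.le_symm_apply]
      show (φ (E k)) ≤ (⟨w, hwmem⟩ : Set.Icc (⊥:L) G₀)
      rw [← Subtype.coe_le_coe, hE]
      exact le_inf (hu k.2) k.2.2.1
    have hwt : φ.symm ⟨w, hwmem⟩ = tv := by
      funext k
      refine le_antisymm ((φ.symm ⟨w, hwmem⟩ k).2.2) ?_
      have := hall k k
      simpa [hEdef] using this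
    have : (⟨w, hwmem⟩ : Set.Icc (⊥:L) G₀) = φ tv := by
      rw [← hwt, OrderIso.apply_symm_apply]
    have hwG : w = G₀ := by
      have := congrArg Subtype.val this
      simpa [hTop] using this
    have : G₀ ≤ u := by rw [← hwG, hw]; exact inf_le_left
    exact this

/-- Star lemma: if G₀ is the LUB of A ⊆ H, then each factor f of G₀ is the LUB
of the elements of A below f. -/
lemma star_lemma (A : Finset L) (hA : ↑A ⊆ H) (hLA : IsLUB (↑A : Set L) G₀)
    {f : L} (hf : f ∈ factorsSet H G₀) :
    IsLUB {a | a ∈ A ∧ a ≤ f} f := by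
  classical
  obtain ⟨φ, hφ⟩ := hH.2 G₀ hb
  set E : (factorsSet H G₀) → ((g : (factorsSet H G₀)) → Set.Icc (⊥ : L) g.1) := fun k h =>
    if hh : h = k then ⟨h.1, by simp⟩ else ⟨⊥, by simp⟩ with hEdef
  have hE : ∀ k : (factorsSet H G₀), ((φ (E k) : L)) = k.1 := by
    intro k
    refine hφ k (E k) (by simp [hEdef]) (fun h hh => by simp [hEdef, hh])
  set tv : (g : (factorsSet H G₀)) → Set.Icc (⊥ : L) g.1 := fun h => ⟨h.1, by simp⟩ with htv
  have hTop : ((φ tv : L)) = G₀ := by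
    refine le_antisymm (φ tv).2.2 ?_
    have h1 : φ.symm ⟨G₀, by simp⟩ ≤ tv := fun h => (φ.symm ⟨G₀, by simp⟩ h).2.2
    have := φ.monotone h1
    rw [OrderIso.apply_symm_apply] at this
    exact this
  have hsupp : ∀ (x : Set.Icc (⊥:L) G₀) (k : (factorsSet H G₀)), (x : L) ≤ k.1 →
      ∀ h : (factorsSet H G₀), h ≠ k → ((φ.symm x h : L)) = ⊥ := by
    intro x k hx h hhk
    have h1 : φ.symm x ≤ E k := by
      rw [OrderIso.symm_apply_le]
      rw [← Subtype.coe_le_coe, hE]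
      exact hx
    have := h1 h
    rw [← Subtype.coe_le_coe] at this
    simp [hEdef, hhk] at this
    exact this
  have hAle : ∀ a ∈ A, a ≤ G₀ := fun a ha => hLA.1 ha
  set kf : (factorsSet H G₀) := ⟨f, hf⟩ with hkf
  constructor
  · rintro a ⟨_, haf⟩; exact haf
  · intro u hu
    set w := u ⊓ f with hw
    have hwf : w ≤ f := inf_le_right
    have hwmem : w ∈ Set.Icc (⊥:L) G₀ := ⟨bot_le, hwf.trans hf.2.1⟩
    set v := φ.symm ⟨w, hwmem⟩ kf with hv
    set m : (g : (factorsSet H G₀)) → Set.Icc (⊥ : L) g.1 := fun h =>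
      if hh : h = kf then ⟨(v : L), by rw [hh]; exact v.2⟩ else ⟨h.1, by simp⟩ with hm
    have hub : ∀ a ∈ A, a ≤ (φ m : L) := by
      intro a ha
      have hamem : a ∈ Set.Icc (⊥:L) G₀ := ⟨bot_le, hAle a ha⟩
      have hle : φ.symm ⟨a, hamem⟩ ≤ m := by
        intro h
        by_cases hh : h = kf
        · subst hh
          rw [← Subtype.coe_le_coe]
          have hmv : ((m kf : L)) = (v : L) := by simp [hm]
          rw [hmv]
          by_cases hac : a ≤ f
          · have haw : a ≤ w := le_inf (hu ⟨ha, hac⟩) hac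
            have h2 : (⟨a, hamem⟩ : Set.Icc (⊥:L) G₀) ≤ ⟨w, hwmem⟩ :=
              Subtype.coe_le_coe.mp haw
            exact Subtype.coe_le_coe.mpr (φ.symm.monotone h2 kf)
          · obtain ⟨f', hf', haf'⟩ := cover_lemma H G₀ (hA ha) (hAle a ha)
            have hne : kf ≠ (⟨f', hf'⟩ : (factorsSet H G₀)) := by
              intro hcontra
              apply hac
              have : f = f' := congrArg Subtype.val hcontra
              rw [this]; exact haf'
            have := hsupp ⟨a, hamem⟩ ⟨f', hf'⟩ haf' kf hne
            rw [this]
            exact bot_le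
        · simp only [hm, dif_neg hh]
          exact Subtype.coe_le_coe.mp (φ.symm ⟨a, hamem⟩ h).2.2
      have := φ.monotone hle
      rw [OrderIso.apply_symm_apply] at this
      exact Subtype.coe_le_coe.mpr this
    have hGm : G₀ ≤ (φ m : L) := hLA.2 hub
    have hmG : (φ m : L) = G₀ := le_antisymm (φ m).2.2 hGm
    have hmtv : m = tv := by
      apply φ.injective
      exact Subtype.ext (hmG.trans hTop.symm)
    have hvf : (v : L) = f := by
      have h0 := congrFun hmtv kf
      have h1 : ((m kf : L)) = (v : L) := by simp [hm]
      have h2 : ((tv kf : L)) = f := rfl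
      rw [← h1, h0, h2]
    have hEw : E kf ≤ φ.symm ⟨w, hwmem⟩ := by
      intro h
      by_cases hh : h = kf
      · subst hh
        rw [← Subtype.coe_le_coe]
        have h2 : ((E kf kf : L)) = f := by simp [hEdef]; rfl
        rw [h2, ← hv, hvf]
      · rw [← Subtype.coe_le_coe]
        simp [hEdef, hh]
    have := φ.monotone hEw
    rw [OrderIso.apply_symm_apply] at this
    rw [← Subtype.coe_le_coe, hE] at this
    calc f ≤ w := this
    _ ≤ u := inf_le_left

end Build
end Aux13

/-- If `H = G \ {G₀}` is also a building set, `S'` is `H`-nested,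
`F_H(G₀) ⊄ S'`, and `S' ∪ F_H(G₀)` is `H`-nested, then `S' ∪ {G₀}` is
`G`-nested. -/
theorem stmt13 (L : Type*) [SemilatticeInf L] [OrderBot L] [Fintype L] [DecidableEq L]
    (G : Set L) (G₀ : L) (hG : IsBuilding L G) (hG₀ : G₀ ∈ G)
    (hH : IsBuilding L (G \ {G₀}))
    (F : Finset L) (hF : (F : Set L) = factorsSet (G \ {G₀}) G₀)
    (S' : Finset L) (h1 : IsNested (G \ {G₀}) S') (h2 : ¬ F ⊆ S')
    (h3 : IsNested (G \ {G₀}) (S' ∪ F)) :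
    IsNested G (insert G₀ S') := by
  classical
  set H : Set L := G \ {G₀} with hHdef
  have hG₀bot : G₀ ≠ ⊥ := hG.1 G₀ hG₀
  have hS'H : (↑S' : Set L) ⊆ H := h1.1
  constructor
  · intro a ha
    rw [Finset.coe_insert, Set.mem_insert_iff] at ha
    rcases ha with rfl | ha
    · exact hG₀
    · exact (hS'H ha).1
  · intro A hAsub hAchain hAcard
    by_cases hmem : G₀ ∈ A
    · -- Case 2 : G₀ ∈ A
      set A' := A.erase G₀ with hA'def
      have hA'S' : A' ⊆ S' := by
        intro a ha
        have haA := Finset.mem_of_mem_erase ha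
        have hane := Finset.ne_of_mem_erase ha
        have := hAsub haA
        rw [Finset.mem_insert] at this
        tauto
      have hA'ne : A'.Nonempty := by
        rw [← Finset.card_pos, Finset.card_erase_of_mem hmem]
        omega
      have hincomp : ∀ a ∈ A', ¬ a ≤ G₀ ∧ ¬ G₀ ≤ a := by
        intro a ha
        have haA := Finset.mem_of_mem_erase ha
        have hane := Finset.ne_of_mem_erase ha
        exact ⟨fun hle => hAchain (Finset.mem_coe.mpr haA) (Finset.mem_coe.mpr hmem) hane hle,
          fun hle => hAchain (Finset.mem_coe.mpr hmem) (Finset.mem_coe.mpr haA) (Ne.symm hane) hle⟩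
      set B := A' ∪ F with hBdef
      have hBsub : B ⊆ S' ∪ F := Finset.union_subset_union_left hA'S'
      have hlubF : IsLUB (↑F : Set L) G₀ := by
        rw [hF]; exact lub_factors H G₀ hG₀bot hH
      have hFle : ∀ f ∈ F, f ≤ G₀ := fun f hf => hlubF.1 (Finset.mem_coe.mpr hf)
      have hUB : upperBounds (↑A : Set L) = upperBounds (↑B : Set L) := by
        ext u
        constructor
        · intro hu b hb
          rw [Finset.mem_coe, hBdef, Finset.mem_union] at hb
          rcases hb with hb | hb
          · exact hu (Finset.mem_coe.mpr (Finset.mem_of_mem_erase hb))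
          · exact (hFle b hb).trans (hu (Finset.mem_coe.mpr hmem))
        · intro hu a ha
          rw [Finset.mem_coe] at ha
          by_cases hag : a = G₀
          · subst hag
            exact hlubF.2 (fun f hf =>
              hu (Finset.mem_coe.mpr (Finset.mem_union_right _ (Finset.mem_coe.mp hf))))
          · exact hu (Finset.mem_coe.mpr
              (Finset.mem_union_left _ (Finset.mem_erase.mpr ⟨hag, ha⟩)))
      set C := B.filter (fun b => ∀ b' ∈ B, b ≤ b' → b = b') with hCdef
      have hCB : C ⊆ B := Finset.filter_subset _ _
      have hmax : ∀ b ∈ B, ∃ c ∈ C, b ≤ c := by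
        intro b hb
        obtain ⟨c, hbc, hc⟩ := Finset.exists_le_maximal B hb
        refine ⟨c, ?_, hbc⟩
        rw [hCdef, Finset.mem_filter]
        exact ⟨hc.1, fun b' hb' hcb' => le_antisymm hcb' (hc.2 hb' hcb')⟩
      have hUBC : upperBounds (↑B : Set L) = upperBounds (↑C : Set L) := by
        ext u
        constructor
        · intro hu c hc
          exact hu (Finset.mem_coe.mpr (hCB (Finset.mem_coe.mp hc)))
        · intro hu b hb
          obtain ⟨c, hcC, hbc⟩ := hmax b (Finset.mem_coe.mp hb)
          exact hbc.trans (hu (Finset.mem_coe.mpr hcC))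
      have hCchain : IsAntichain (· ≤ ·) (↑C : Set L) := by
        intro x hx y hy hxy hle
        rw [Finset.mem_coe, hCdef, Finset.mem_filter] at hx
        exact hxy (hx.2 y (hCB (Finset.mem_coe.mp hy)) hle)
      obtain ⟨a0, ha0⟩ := hA'ne
      have ha0B : a0 ∈ B := Finset.mem_union_left _ ha0
      have hCcard : 2 ≤ C.card := by
        by_contra hcon
        have hCne : C.Nonempty := by
          obtain ⟨c, hc, _⟩ := hmax a0 ha0B
          exact ⟨c, hc⟩
        have hone : C.card = 1 := le_antisymm (by omega) (Finset.card_pos.mpr hCne)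
        obtain ⟨c, hc⟩ := Finset.card_eq_one.mp hone
        have hble : ∀ b ∈ B, b ≤ c := by
          intro b hb
          obtain ⟨c', hc', hbc'⟩ := hmax b hb
          rw [hc, Finset.mem_singleton] at hc'
          exact hc' ▸ hbc'
        have hcB : c ∈ B := hCB (hc ▸ Finset.mem_singleton_self c)
        rw [hBdef, Finset.mem_union] at hcB
        rcases hcB with hcA' | hcF
        · exact (hincomp c hcA').2
            (hlubF.2 (fun f hf => hble f (Finset.mem_union_right _ (Finset.mem_coe.mp hf))))
        · exact (hincomp a0 ha0).1 ((hble a0 ha0B).trans (hFle c hcF))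
      obtain ⟨j, hj, hjH⟩ := h3.2 C (hCB.trans hBsub) hCchain hCcard
      have hUAC : upperBounds (↑A : Set L) = upperBounds (↑C : Set L) := hUB.trans hUBC
      have hjA : IsLUB (↑A : Set L) j := by
        show IsLeast (upperBounds (↑A : Set L)) j
        rw [hUAC]
        exact hj
      refine ⟨j, hjA, ?_⟩
      intro hjG
      have hne : j ≠ G₀ := by
        intro h
        exact (hincomp a0 ha0).1 (h ▸ hjA.1 (Finset.mem_coe.mpr (Finset.mem_of_mem_erase ha0)))
      exact hjH ⟨hjG, hne⟩
    · -- Case 1 : G₀ ∉ A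
      have hAS' : A ⊆ S' := by
        intro a ha
        have := hAsub ha
        rw [Finset.mem_insert] at this
        rcases this with rfl | h
        · exact absurd ha hmem
        · exact h
      obtain ⟨j, hj, hjH⟩ := h1.2 A hAS' hAchain hAcard
      refine ⟨j, hj, ?_⟩
      intro hjG
      have hjG₀ : j = G₀ := by
        by_contra hne
        exact hjH ⟨hjG, hne⟩
      rw [hjG₀] at hj
      apply h2
      intro f hfF
      have hfK : f ∈ factorsSet H G₀ := by
        rw [← hF]; exact hfF
      have hAH : (↑A : Set L) ⊆ H := fun a ha => hS'H (Finset.coe_subset.mpr hAS' ha)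
      have hstar := star_lemma H G₀ hG₀bot hH A hAH hj hfK
      set Af := A.filter (fun a => a ≤ f) with hAfdef
      have hAfco : (↑Af : Set L) = {a | a ∈ A ∧ a ≤ f} := by
        rw [hAfdef]; ext x; simp
      have hlub : IsLUB (↑Af : Set L) f := by rw [hAfco]; exact hstar
      have hAfne : Af.Nonempty := by
        by_contra hcon
        rw [Finset.not_nonempty_iff_eq_empty] at hcon
        rw [hcon] at hlub
        have : f ≤ ⊥ := hlub.2 (by simp [upperBounds])
        exact hH.1 f hfK.1 (le_bot_iff.mp this)
      by_cases hc : 2 ≤ Af.card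
      · obtain ⟨j', hj', hj'H⟩ := h1.2 Af ((Finset.filter_subset _ _).trans hAS')
          (hAchain.subset (by rw [hAfco]; exact fun x hx => Finset.mem_coe.mpr hx.1)) hc
        have : f = j' := hlub.unique hj'
        exact absurd (this ▸ hfK.1) hj'H
      · have hone : Af.card = 1 := le_antisymm (by omega) (Finset.card_pos.mpr hAfne)
        obtain ⟨a, ha⟩ := Finset.card_eq_one.mp hone
        rw [ha] at hlub
        have hfa : f = a := hlub.unique (by simpa using isLUB_singleton)
        have : a ∈ S' := hAS' ((Finset.filter_subset _ _) (ha ▸ Finset.mem_singleton_self a))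
        exact hfa ▸ this
end

section
/- Let L be a finite meet-semilattice, G a building set in L with G₀ ∈ G such that H := G \ {G₀} is also a building set. If S is an H-nested set not containing F_H(G₀), then S is G-nested. -/
open scoped BigOperators

variable {L : Type*}

/-- Every element of `H` below `X` is below some `H`-factor of `X`. -/
lemma factor_exists [PartialOrder L] [Fintype L] (H : Set L) (X a : L)
    (ha : a ∈ H) (hax : a ≤ X) : ∃ g ∈ factorsSet H X, a ≤ g := by
  classical
  set s : Set L := {h | h ∈ H ∧ h ≤ X ∧ a ≤ h} with hs
  obtain ⟨m, hm, hmax'⟩ := Set.Finite.exists_maximalFor id s (Set.toFinite s) ⟨a, ha, hax, le_rfl⟩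
  have hmax : ∀ h ∈ s, m ≤ h → m = h := fun h hh hmh => le_antisymm hmh (hmax' hh hmh)
  exact ⟨m, ⟨hm.1, hm.2.1, fun h hh hhx hmh => hmax h ⟨hh, hhx, hm.2.2.trans hmh⟩ hmh⟩,
    hm.2.2⟩

open Classical in
/-- The "unit vector" supported at factor `g`. -/
noncomputable def unitVec [PartialOrder L] [OrderBot L] {H : Set L} {X : L}
    (g : factorsSet H X) : (h : factorsSet H X) → Set.Icc (⊥ : L) h.1 :=
  fun h => if hh : h = g then ⟨h.1, bot_le, le_rfl⟩ else ⟨⊥, bot_le, bot_le⟩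

lemma unitVec_self [PartialOrder L] [OrderBot L] {H : Set L} {X : L}
    (g : factorsSet H X) : (unitVec g g : L) = g.1 := by simp [unitVec]

lemma unitVec_ne [PartialOrder L] [OrderBot L] {H : Set L} {X : L}
    (g h : factorsSet H X) (hh : h ≠ g) : (unitVec g h : L) = ⊥ := by simp [unitVec, hh]

/-- Key lemma: an antichain of `H`-nested elements whose least upper bound is `G₀`
must be exactly the set of `H`-factors of `G₀`. -/
lemma key_lemma [SemilatticeInf L] [OrderBot L] [Fintype L] (H : Set L) (G₀ : L)
    (hG₀ : G₀ ≠ ⊥) (hH : IsBuilding L H)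
    (S : Finset L) (hS : IsNested H S) (A : Finset L) (hAS : A ⊆ S)
    (hanti : IsAntichain (· ≤ ·) (A : Set L)) (hlub : IsLUB (A : Set L) G₀) :
    (A : Set L) = factorsSet H G₀ := by
  classical
  obtain ⟨hbot, hbuild⟩ := hH
  obtain ⟨φ, hφ⟩ := hbuild G₀ hG₀
  have hAH : ∀ a ∈ A, a ∈ H := fun a ha => hS.1 (hAS ha)
  have hAle : ∀ a ∈ (A : Set L), a ≤ G₀ := fun a ha => hlub.1 ha
  -- φ of the unit vector is the factor
  have hφu : ∀ g : factorsSet H G₀, (φ (unitVec g) : L) = g.1 := fun g =>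
    hφ g (unitVec g) (unitVec_self g) (fun h hh => unitVec_ne g h hh)
  -- the preimage of A in the interval [⊥, G₀]
  set A' : Set (Set.Icc (⊥ : L) G₀) := Subtype.val ⁻¹' (A : Set L) with hA'
  have hlub' : IsLUB A' ⟨G₀, bot_le, le_rfl⟩ := by
    constructor
    · intro x _; exact Subtype.coe_le_coe.mp x.2.2
    · intro b hb
      have : G₀ ≤ (b : L) := hlub.2 (fun a ha => by
        have : (⟨a, bot_le, hAle a ha⟩ : Set.Icc (⊥ : L) G₀) ≤ b := hb ha
        exact this)
      exact this
  have hlubp : IsLUB (φ.symm '' A') (φ.symm ⟨G₀, bot_le, le_rfl⟩) :=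
    φ.symm.isLUB_image'.mpr hlub'
  have hcomp := isLUB_pi.mp hlubp
  -- the top component of φ.symm ⟨G₀⟩ at each factor is the factor itself
  have hTop : ∀ g : factorsSet H G₀, (φ.symm ⟨G₀, bot_le, le_rfl⟩ g : L) = g.1 := by
    intro g
    refine le_antisymm (φ.symm ⟨G₀, bot_le, le_rfl⟩ g).2.2 ?_
    have h1 : φ (unitVec g) ≤ ⟨G₀, bot_le, le_rfl⟩ := (φ (unitVec g)).2.2
    have h2 : unitVec g ≤ φ.symm ⟨G₀, bot_le, le_rfl⟩ := by
      have := φ.symm.monotone h1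
      rwa [φ.symm_apply_apply] at this
    have h3 : (unitVec g g : L) ≤ (φ.symm ⟨G₀, bot_le, le_rfl⟩ g : L) := h2 g
    rw [unitVec_self g] at h3
    exact h3
  -- for each factor g, the elements of A below g have LUB g
  have hBg : ∀ g : factorsSet H G₀, IsLUB ((A.filter (· ≤ g.1) : Finset L) : Set L) g.1 := by
    intro g
    constructor
    · intro a ha
      simp only [Finset.coe_filter, Set.mem_setOf_eq] at ha
      exact ha.2
    · intro b hb
      have hb'G₀ : b ⊓ g.1 ≤ G₀ := inf_le_right.trans g.2.2.1
      set w := φ.symm ⟨b ⊓ g.1, bot_le, hb'G₀⟩ with hw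
      have hwub : w g ∈ upperBounds (Function.eval g '' (φ.symm '' A')) := by
        rintro _ ⟨_, ⟨x, hxA', rfl⟩, rfl⟩
        simp only [Function.eval]
        by_cases hxg : (x : L) ≤ g.1
        · have hxb : (x : L) ≤ b := hb (by
            simp only [Finset.coe_filter, Set.mem_setOf_eq]; exact ⟨hxA', hxg⟩)
          have hx' : x ≤ ⟨b ⊓ g.1, bot_le, hb'G₀⟩ := by
            exact Subtype.coe_le_coe.mp (le_inf hxb hxg)
          have := φ.symm.monotone hx'
          exact this g
        · obtain ⟨f, hf, hxf⟩ := factor_exists H G₀ (x : L) (hAH _ hxA') x.2.2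
          have hfg : (⟨f, hf⟩ : factorsSet H G₀) ≠ g := by
            rintro rfl; exact hxg hxf
          have hx' : x ≤ φ (unitVec ⟨f, hf⟩) := by
            refine Subtype.coe_le_coe.mp ?_
            rw [hφu ⟨f, hf⟩]; exact hxf
          have h5 : φ.symm x ≤ unitVec ⟨f, hf⟩ := by
            have := φ.symm.monotone hx'
            rwa [φ.symm_apply_apply] at this
          have h6 := h5 g
          have h7 : ((unitVec (⟨f, hf⟩ : factorsSet H G₀) g : L)) = ⊥ :=
            unitVec_ne _ _ (fun hgf => hfg hgf.symm)
          have h8 : ((φ.symm x g : L)) ≤ ⊥ := by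
            calc ((φ.symm x g : L)) ≤ _ := h6
              _ = ⊥ := h7
          exact Subtype.coe_le_coe.mp (h8.trans bot_le)
      have h9 := (hcomp g).2 hwub
      have h10 : g.1 ≤ (w g : L) := by
        calc g.1 = (φ.symm ⟨G₀, bot_le, le_rfl⟩ g : L) := (hTop g).symm
          _ ≤ (w g : L) := h9
      have h11 : unitVec g ≤ w := by
        intro h
        by_cases hh : h = g
        · subst hh
          refine Subtype.coe_le_coe.mp ?_
          rw [unitVec_self]; exact h10
        · refine Subtype.coe_le_coe.mp ?_
          rw [unitVec_ne g h hh]; exact bot_le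
      have h12 := φ.monotone h11
      rw [φ.apply_symm_apply] at h12
      have h13 : g.1 ≤ b ⊓ g.1 := by
        calc g.1 = (φ (unitVec g) : L) := (hφu g).symm
          _ ≤ b ⊓ g.1 := h12
      exact h13.trans inf_le_left
  -- each factor belongs to A
  have hgA : ∀ g : factorsSet H G₀, g.1 ∈ A := by
    intro g
    set B := A.filter (· ≤ g.1) with hB
    rcases Nat.lt_or_ge B.card 2 with hc | hc
    · interval_cases h : B.card
      · have hBe : B = ∅ := Finset.card_eq_zero.mp h
        have h14 : (⊥ : L) ∈ upperBounds ((A.filter (· ≤ g.1) : Finset L) : Set L) := by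
          rw [← hB, hBe]; simp
        have := (hBg g).2 h14
        exact absurd (le_bot_iff.mp this) (hbot g.1 g.2.1)
      · obtain ⟨a, hae⟩ := Finset.card_eq_one.mp h
        have hIs := hBg g
        rw [← hB, hae] at hIs
        have : a = g.1 := (isLUB_singleton (a := a)).unique (by simpa using hIs)
        have haA : a ∈ A := by
          have : a ∈ B := by rw [hae]; exact Finset.mem_singleton_self a
          exact (Finset.mem_filter.mp this).1
        rwa [← this]
    · exfalso
      obtain ⟨j, hj, hjH⟩ := hS.2 B ((Finset.filter_subset _ _).trans hAS)
        (hanti.subset (by intro x hx; exact (Finset.mem_filter.mp hx).1)) hc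
      have := hj.unique (hBg g)
      exact hjH (this ▸ g.2.1)
  -- conclude
  ext x
  constructor
  · intro hx
    obtain ⟨g, hg, hxg⟩ := factor_exists H G₀ x (hAH x hx) (hAle x hx)
    have hgA' : g ∈ (A : Set L) := hgA ⟨g, hg⟩
    by_cases hxe : x = g
    · rwa [hxe]
    · exact absurd hxg (hanti hx hgA' hxe)
  · intro hx
    exact hgA ⟨x, hx⟩

/-- If `H = G \ {G₀}` is also a building set and `S` is `H`-nested
and does not contain `F_H(G₀)`, then `S` is `G`-nested. -/
theorem stmt14 (L : Type*) [SemilatticeInf L] [OrderBot L] [Fintype L]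
    (G : Set L) (G₀ : L) (hG : IsBuilding L G) (hG₀ : G₀ ∈ G)
    (hH : IsBuilding L (G \ {G₀}))
    (F : Finset L) (hF : (F : Set L) = factorsSet (G \ {G₀}) G₀)
    (S : Finset L) (hS : IsNested (G \ {G₀}) S) (hFS : ¬ F ⊆ S) :
    IsNested G S := by
  classical
  constructor
  · exact fun x hx => (hS.1 hx).1
  · intro A hA hanti hcard
    obtain ⟨j, hj, hjH⟩ := hS.2 A hA hanti hcard
    by_cases hjG : j ∈ G
    · have hjG₀ : j = G₀ := by
        by_contra h; exact hjH ⟨hjG, h⟩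
      subst hjG₀
      have hkey := key_lemma (G \ {j}) j (hG.1 j hG₀) hH S hS A hA hanti hj
      have hAF : A = F := Finset.coe_injective (by rw [hF, hkey])
      exact absurd (hAF ▸ hA) hFS
    · exact ⟨j, hj, hjG⟩
end

section
/- Let L be a finite atomic meet-semilattice with atoms A_1,...,A_n, and G a building set in L. Then the collection Σ(L,G) = { V(S) : S ∈ N(L,G) } of cones V(S) = cone{ v_X : X ∈ S } in ℝⁿ, where v_X is the 0/1 characteristic vector of the set of atoms below X, is a simplicial fan whose face poset coincides with the face poset of the nested set complex N(L,G). -/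
open scoped BigOperators

variable {L : Type*}

set_option linter.unusedSectionVars false
set_option linter.unusedVariables false
set_option maxHeartbeats 1600000

open Classical

section Basic
variable [SemilatticeInf L] [OrderBot L] [Fintype L] [DecidableEq L]

lemma exists_maximal_above (s : Finset L) {x : L} (hx : x ∈ s) :
    ∃ m ∈ s, x ≤ m ∧ ∀ z ∈ s, m ≤ z → m = z := by
  obtain ⟨m, hm, hmax⟩ : ∃ m ∈ s.filter (x ≤ ·), ∀ z ∈ s.filter (x ≤ ·), ¬ m < z := by
    obtain ⟨m, hm⟩ := Finset.exists_maximal (s := s.filter (x ≤ ·)) ⟨x, by simp [hx]⟩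
    exact ⟨m, hm.1, fun z hz hlt => not_le_of_gt hlt (hm.2 hz hlt.le)⟩
  simp only [Finset.mem_filter] at hm
  refine ⟨m, hm.1, hm.2, fun z hz hmz => ?_⟩
  by_contra hne
  exact hmax z (Finset.mem_filter.mpr ⟨hz, hm.2.trans hmz⟩) (lt_of_le_of_ne hmz hne)

lemma le_factor {G : Set L} {X h : L} (hh : h ∈ G) (hle : h ≤ X) :
    ∃ g ∈ factorsSet G X, h ≤ g := by
  obtain ⟨m, hm, hge, hmax⟩ := exists_maximal_above ((Set.toFinset G).filter (· ≤ X))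
    (by simp [Set.mem_toFinset, hh, hle] : h ∈ _)
  simp only [Finset.mem_filter, Set.mem_toFinset] at hm
  refine ⟨m, ⟨hm.1, hm.2, fun h' hh' hle' hmle => ?_⟩, hge⟩
  exact hmax h' (by simp [Set.mem_toFinset, hh', hle']) hmle

end Basic

section Phi
variable [SemilatticeInf L] [OrderBot L] [Fintype L] [DecidableEq L] {G : Set L} {X : L}

lemma icc_bot_le' {x : L} {u v : Set.Icc (⊥:L) x} (h : (v : L) = ⊥) : v ≤ u :=
  Subtype.coe_le_coe.mp (by rw [h]; exact bot_le)

lemma icc_le_top' {x : L} {u v : Set.Icc (⊥:L) x} (h : (v : L) = x) : u ≤ v :=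
  Subtype.coe_le_coe.mp (by rw [h]; exact u.2.2)

noncomputable def unitT (G : Set L) (X : L) (g : factorsSet G X) :
    (h : factorsSet G X) → Set.Icc (⊥ : L) h.1 := fun h =>
  if h = g then ⟨h.1, ⟨bot_le, le_rfl⟩⟩ else ⟨⊥, ⟨le_rfl, bot_le⟩⟩

lemma unitT_same (g : factorsSet G X) : ((unitT G X g g : Set.Icc (⊥:L) g.1) : L) = g.1 := by
  simp [unitT]

lemma unitT_ne {g h : factorsSet G X} (hne : h ≠ g) : ((unitT G X g h : Set.Icc (⊥:L) h.1) : L) = ⊥ := by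
  simp [unitT, hne]

noncomputable def botT (G : Set L) (X : L) :
    (h : factorsSet G X) → Set.Icc (⊥ : L) h.1 := fun h => ⟨⊥, ⟨le_rfl, bot_le⟩⟩

noncomputable def topT (G : Set L) (X : L) :
    (h : factorsSet G X) → Set.Icc (⊥ : L) h.1 := fun h => ⟨h.1, ⟨bot_le, le_rfl⟩⟩

lemma botT_coe (h : factorsSet G X) : ((botT G X h : Set.Icc (⊥:L) h.1) : L) = ⊥ := rfl
lemma topT_coe (h : factorsSet G X) : ((topT G X h : Set.Icc (⊥:L) h.1) : L) = h.1 := rfl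

lemma building_master (hG : IsBuilding L G) (hX : X ≠ ⊥) :
    (factorsSet G X).Nonempty ∧
    (∀ g h : L, g ∈ factorsSet G X → h ∈ factorsSet G X → g ≠ h → g ⊓ h = ⊥) ∧
    (∀ M : Set L, M ⊆ G → IsLUB M X → ∀ g ∈ factorsSet G X,
      IsLUB {m | m ∈ M ∧ m ≤ g} g) := by
  obtain ⟨φ, hφ⟩ := hG.2 X hX
  have hmemX : ∀ g : factorsSet G X, g.1 ∈ Set.Icc (⊥:L) X :=
    fun g => ⟨bot_le, g.2.2.1⟩
  have hunit : ∀ g : factorsSet G X, (φ (unitT G X g) : L) = g.1 := by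
    intro g
    exact hφ g _ (unitT_same g) (fun h hh => unitT_ne hh)
  have hsymm_unit : ∀ g : factorsSet G X, φ.symm ⟨g.1, hmemX g⟩ = unitT G X g := by
    intro g
    have h1 : φ (unitT G X g) = ⟨g.1, hmemX g⟩ := Subtype.ext (hunit g)
    rw [← h1]
    exact φ.symm_apply_apply _
  have hbotmem : (⊥:L) ∈ Set.Icc (⊥:L) X := ⟨le_rfl, bot_le⟩
  have hXmem : X ∈ Set.Icc (⊥:L) X := ⟨bot_le, le_rfl⟩
  have hphibot : (φ (botT G X) : L) = ⊥ := by
    have h2 : botT G X ≤ φ.symm ⟨⊥, hbotmem⟩ := Pi.le_def.mpr fun h => icc_bot_le' (botT_coe h)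
    have h3 : φ (botT G X) ≤ ⟨⊥, hbotmem⟩ := by
      calc φ (botT G X) ≤ φ (φ.symm ⟨⊥, hbotmem⟩) := φ.monotone h2
        _ = ⟨⊥, hbotmem⟩ := φ.apply_symm_apply _
    exact le_bot_iff.mp (Subtype.coe_le_coe.mpr h3)
  refine ⟨?_, ?_, ?_⟩
  · -- nonempty
    by_contra hemp
    rw [Set.not_nonempty_iff_eq_empty] at hemp
    have hE : ∀ k : factorsSet G X, False := fun k =>
      Set.eq_empty_iff_forall_notMem.mp hemp k.1 k.2
    have h4 : φ.symm ⟨⊥, hbotmem⟩ = φ.symm ⟨X, hXmem⟩ :=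
      funext fun k => (hE k).elim
    have h5 := congrArg φ h4
    rw [φ.apply_symm_apply, φ.apply_symm_apply] at h5
    exact hX (congrArg Subtype.val h5).symm
  · -- inf of distinct factors is ⊥
    intro g h hg hh hne
    set gS : factorsSet G X := ⟨g, hg⟩ with hgS
    set hS : factorsSet G X := ⟨h, hh⟩ with hhS
    have hgne : gS ≠ hS := fun e => hne (congrArg Subtype.val e)
    have hmem : g ⊓ h ∈ Set.Icc (⊥:L) X := ⟨bot_le, inf_le_left.trans hg.2.1⟩
    have hug : φ.symm ⟨g ⊓ h, hmem⟩ ≤ unitT G X gS := by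
      rw [← hsymm_unit gS]
      exact φ.symm.monotone (Subtype.mk_le_mk.mpr inf_le_left)
    have huh : φ.symm ⟨g ⊓ h, hmem⟩ ≤ unitT G X hS := by
      rw [← hsymm_unit hS]
      exact φ.symm.monotone (Subtype.mk_le_mk.mpr inf_le_right)
    have hu_eq : φ.symm ⟨g ⊓ h, hmem⟩ = botT G X := by
      funext k
      refine le_antisymm ?_ (icc_bot_le' (botT_coe k))
      by_cases hk : k = hS
      · have h1 := hug k
        have hk' : k ≠ gS := by
          rw [hk]; exact fun e => hgne e.symm
        calc φ.symm ⟨g ⊓ h, hmem⟩ k ≤ unitT G X gS k := h1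
          _ ≤ botT G X k := icc_bot_le' (unitT_ne hk')
      · calc φ.symm ⟨g ⊓ h, hmem⟩ k ≤ unitT G X hS k := huh k
          _ ≤ botT G X k := icc_bot_le' (unitT_ne hk)
    have h6 : (φ (φ.symm ⟨g ⊓ h, hmem⟩) : L) = g ⊓ h := by
      rw [φ.apply_symm_apply]
    rw [hu_eq, hphibot] at h6
    exact h6.symm
  · -- lub decomposition
    intro M hMG hM g hg
    constructor
    · rintro m ⟨hmM, hmg⟩
      exact hmg
    · intro z hz
      set gS : factorsSet G X := ⟨g, hg⟩ with hgS
      have hzg : z ⊓ g ∈ Set.Icc (⊥:L) X := ⟨bot_le, inf_le_right.trans hg.2.1⟩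
      set w := φ.symm ⟨z ⊓ g, hzg⟩ with hw_def
      set v := Function.update (topT G X) gS (w gS) with hv_def
      have hvm : ∀ (m : L) (hm : m ∈ M), (⟨m, ⟨bot_le, hM.1 hm⟩⟩ : Set.Icc (⊥:L) X) ≤ φ v := by
        intro m hm
        have hmX : m ≤ X := hM.1 hm
        obtain ⟨f, hf, hmf⟩ := le_factor (hMG hm) hmX
        set fS : factorsSet G X := ⟨f, hf⟩ with hfS
        have hum : φ.symm ⟨m, ⟨bot_le, hmX⟩⟩ ≤ unitT G X fS := by
          rw [← hsymm_unit fS]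
          exact φ.symm.monotone (Subtype.mk_le_mk.mpr hmf)
        have hle_v : φ.symm ⟨m, ⟨bot_le, hmX⟩⟩ ≤ v := by
          refine Pi.le_def.mpr fun k => ?_
          by_cases hk : k = gS
          · subst hk
            rw [hv_def]
            rw [Function.update_self]
            by_cases hfg : fS = gS
            · have hmg : m ≤ g := by
                have h11 : m ≤ f := hmf
                rwa [show f = g from congrArg Subtype.val hfg] at h11
              have hmz : m ≤ z := hz ⟨hm, hmg⟩
              have h7 : φ.symm ⟨m, ⟨bot_le, hmX⟩⟩ ≤ w := by
                rw [hw_def]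
                exact φ.symm.monotone (Subtype.mk_le_mk.mpr (le_inf hmz hmg))
              exact h7 gS
            · calc φ.symm ⟨m, ⟨bot_le, hmX⟩⟩ gS ≤ unitT G X fS gS := hum gS
                _ ≤ w gS := icc_bot_le' (unitT_ne (fun e => hfg e.symm))
          · rw [hv_def, Function.update_of_ne hk]
            exact icc_le_top' (topT_coe k)
        calc (⟨m, ⟨bot_le, hmX⟩⟩ : Set.Icc (⊥:L) X)
            = φ (φ.symm ⟨m, ⟨bot_le, hmX⟩⟩) := (φ.apply_symm_apply _).symm
          _ ≤ φ v := φ.monotone hle_v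
      have hub : (φ v : L) ∈ upperBounds M := fun m hm =>
        Subtype.coe_le_coe.mpr (hvm m hm)
      have hfv : φ v = ⟨X, hXmem⟩ := Subtype.ext (le_antisymm (φ v).2.2 (hM.2 hub))
      have hv_eq : v = φ.symm ⟨X, hXmem⟩ := by
        rw [← hfv, φ.symm_apply_apply]
      have htop : topT G X ≤ v := by
        rw [hv_eq]
        have h8 : φ (topT G X) ≤ ⟨X, hXmem⟩ := Subtype.coe_le_coe.mp (φ (topT G X)).2.2
        calc topT G X = φ.symm (φ (topT G X)) := (φ.symm_apply_apply _).symm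
          _ ≤ φ.symm ⟨X, hXmem⟩ := φ.symm.monotone h8
      have hg_le : (g : L) ≤ (w gS : L) := by
        have h9 := Subtype.coe_le_coe.mpr (htop gS)
        rw [topT_coe] at h9
        rw [hv_def, Function.update_self] at h9
        exact h9
      have hunit_le_w : unitT G X gS ≤ w := by
        refine Pi.le_def.mpr fun k => ?_
        by_cases hk : k = gS
        · subst hk
          refine Subtype.coe_le_coe.mp ?_
          rw [unitT_same]
          exact hg_le
        · exact icc_bot_le' (unitT_ne hk)
      have h10 : (φ (unitT G X gS) : L) ≤ (φ w : L) :=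
        Subtype.coe_le_coe.mpr (φ.monotone hunit_le_w)
      rw [hunit gS] at h10
      rw [hw_def, φ.apply_symm_apply] at h10
      exact h10.trans inf_le_left
end Phi

section Nested
variable [SemilatticeInf L] [OrderBot L] [Fintype L] [DecidableEq L] {G : Set L}

lemma le_of_atoms (hAtomic : ∀ X : L, IsLUB {a : L | IsAtom a ∧ a ≤ X} X)
    {X Y : L} (h : ∀ a : L, IsAtom a → a ≤ X → a ≤ Y) : X ≤ Y :=
  (hAtomic X).2 (fun a ha => h a ha.1 ha.2)

lemma exists_atom_le (hAtomic : ∀ X : L, IsLUB {a : L | IsAtom a ∧ a ≤ X} X)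
    {X : L} (hX : X ≠ ⊥) : ∃ a : L, IsAtom a ∧ a ≤ X := by
  by_contra h
  push_neg at h
  have : X ≤ ⊥ := (hAtomic X).2 (fun a ha => absurd ha.2 (h a ha.1))
  exact hX (le_bot_iff.mp this)

lemma factors_self {X : L} (hX : X ∈ G) : factorsSet G X = {X} := by
  ext h
  constructor
  · rintro ⟨hmem, hle, hmax⟩
    exact hmax X hX le_rfl hle
  · rintro rfl
    exact ⟨hX, le_rfl, fun h' hh' hle hle' => le_antisymm hle' hle⟩

lemma IsNested.subset {S T : Finset L} (hS : IsNested G S) (hTS : T ⊆ S) :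
    IsNested G T :=
  ⟨fun x hx => hS.1 (hTS hx), fun A hA => hS.2 A (hA.trans hTS)⟩

lemma IsNested.ne_bot (hG : IsBuilding L G) {S : Finset L} (hS : IsNested G S)
    {X : L} (hX : X ∈ S) : X ≠ ⊥ := hG.1 X (hS.1 (by exact_mod_cast hX))

lemma pair_coe (X Y : L) : (↑({X, Y} : Finset L) : Set L) = {X, Y} := by simp

/-- laminarity -/
lemma laminar (hG : IsBuilding L G) {S : Finset L} (hS : IsNested G S)
    {X Y : L} (hX : X ∈ S) (hY : Y ∈ S)
    {a : L} (ha : IsAtom a) (haX : a ≤ X) (haY : a ≤ Y) : X ≤ Y ∨ Y ≤ X := by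
  by_cases h1 : X ≤ Y
  · exact Or.inl h1
  by_cases h2 : Y ≤ X
  · exact Or.inr h2
  exfalso
  have hne : X ≠ Y := fun e => h1 (e ▸ le_rfl)
  have hanti : IsAntichain (· ≤ ·) (↑({X, Y} : Finset L) : Set L) := by
    rw [pair_coe]
    intro u hu v hv huv
    rcases Set.mem_insert_iff.mp hu with rfl | hu
    · rcases Set.mem_insert_iff.mp hv with rfl | hv
      · exact absurd rfl huv
      · rw [Set.mem_singleton_iff] at hv; subst hv; exact h1
    · rw [Set.mem_singleton_iff] at hu; subst hu
      rcases Set.mem_insert_iff.mp hv with rfl | hv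
      · exact h2
      · rw [Set.mem_singleton_iff] at hv; subst hv; exact absurd rfl huv
  have hcard : 2 ≤ ({X, Y} : Finset L).card := by
    rw [Finset.card_insert_of_notMem (by simpa using hne), Finset.card_singleton]
  obtain ⟨j, hj, hjG⟩ := hS.2 {X, Y} (by
    intro u hu
    rcases Finset.mem_insert.mp hu with rfl | hu
    · exact hX
    · rw [Finset.mem_singleton] at hu; subst hu; exact hY) hanti hcard
  rw [pair_coe] at hj
  have hXj : X ≤ j := hj.1 (Set.mem_insert _ _)
  have hYj : Y ≤ j := hj.1 (Set.mem_insert_iff.mpr (Or.inr rfl))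
  have hjbot : j ≠ ⊥ := fun e => (hS.ne_bot hG hX) (le_bot_iff.mp (e ▸ hXj))
  obtain ⟨hne', hinf, _⟩ := building_master hG hjbot
  obtain ⟨gX, hgX, hXgX⟩ := le_factor (hS.1 (by exact_mod_cast hX)) hXj
  obtain ⟨gY, hgY, hYgY⟩ := le_factor (hS.1 (by exact_mod_cast hY)) hYj
  by_cases hgg : gX = gY
  · subst hgg
    have hup : gX ∈ upperBounds ({X, Y} : Set L) := by
      intro u hu
      rcases Set.mem_insert_iff.mp hu with rfl | hu
      · exact hXgX
      · rw [Set.mem_singleton_iff] at hu; subst hu; exact hYgY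
    have hle : j ≤ gX := hj.2 hup
    exact hjG (hle.antisymm hgX.2.1 ▸ hgX.1)
  · have hainf : a ≤ gX ⊓ gY := le_inf (haX.trans hXgX) (haY.trans hYgY)
    rw [hinf gX gY hgX hgY hgg] at hainf
    exact ha.1 (le_bot_iff.mp hainf)

/-- every element of a nested set has a private atom -/
lemma private_atom (hAtomic : ∀ X : L, IsLUB {a : L | IsAtom a ∧ a ≤ X} X)
    (hG : IsBuilding L G) {S : Finset L} (hS : IsNested G S) {X : L} (hX : X ∈ S) :
    ∃ a : L, IsAtom a ∧ a ≤ X ∧ ∀ Y ∈ S, a ≤ Y → X ≤ Y := by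
  have hXG : X ∈ G := hS.1 (by exact_mod_cast hX)
  have hXbot : X ≠ ⊥ := hS.ne_bot hG hX
  by_cases hcov : ∃ a : L, IsAtom a ∧ a ≤ X ∧ ∀ Y ∈ S, Y < X → ¬ a ≤ Y
  · obtain ⟨a, ha, haX, hpriv⟩ := hcov
    refine ⟨a, ha, haX, fun Y hY haY => ?_⟩
    rcases laminar hG hS hX hY ha haX haY with h | h
    · exact h
    · rcases eq_or_lt_of_le h with rfl | h
      · exact le_rfl
      · exact absurd haY (hpriv Y hY h)
  · exfalso
    push_neg at hcov
    set D : Finset L := S.filter (· < X) with hD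
    set C : Finset L := D.filter (fun Y => ∀ Z ∈ D, Y ≤ Z → Y = Z) with hC
    have hCanti : IsAntichain (· ≤ ·) (↑C : Set L) := by
      intro u hu v hv huv hle
      rw [Finset.mem_coe, hC, Finset.mem_filter] at hu hv
      exact huv (hu.2 v hv.1 hle)
    have hCsubS : C ⊆ S := fun x hx =>
      (Finset.mem_filter.mp (Finset.mem_filter.mp hx).1).1
    have hatomC : ∀ a : L, IsAtom a → a ≤ X → ∃ Y ∈ C, a ≤ Y := by
      intro a ha haX
      obtain ⟨Y, hY, hlt, haY⟩ := hcov a ha haX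
      have hYD : Y ∈ D := Finset.mem_filter.mpr ⟨hY, hlt⟩
      obtain ⟨m, hm, hYm, hmax⟩ := exists_maximal_above D hYD
      refine ⟨m, Finset.mem_filter.mpr ⟨hm, fun Z hZ hle => hmax Z hZ hle⟩, haY.trans hYm⟩
    rcases Finset.eq_empty_or_nonempty C with hCe | hCne
    · obtain ⟨a, ha, haX⟩ := exists_atom_le hAtomic hXbot
      obtain ⟨Y, hY, _⟩ := hatomC a ha haX
      rw [hCe] at hY
      exact absurd hY (Finset.notMem_empty Y)
    · rcases eq_or_lt_of_le (Finset.one_le_card.mpr hCne) with hcard1 | hcard2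
      · -- C = {Y}
        obtain ⟨Y, hCY⟩ := Finset.card_eq_one.mp hcard1.symm
        have hYC : Y ∈ C := by rw [hCY]; exact Finset.mem_singleton_self Y
        have hYlt : Y < X := (Finset.mem_filter.mp (Finset.mem_filter.mp hYC).1).2
        have hXY : X ≤ Y := le_of_atoms hAtomic (fun a ha haX => by
          obtain ⟨Z, hZ, haZ⟩ := hatomC a ha haX
          rw [hCY, Finset.mem_singleton] at hZ
          exact hZ ▸ haZ)
        exact absurd hXY (not_le_of_gt hYlt)
      · obtain ⟨j, hj, hjG⟩ := hS.2 C hCsubS hCanti hcard2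
        have hjX : j ≤ X := hj.2 (fun u hu => by
          have hu' : u ∈ D := (Finset.mem_filter.mp (by exact_mod_cast hu)).1
          exact (Finset.mem_filter.mp hu').2.le)
        have hXj : X ≤ j := le_of_atoms hAtomic (fun a ha haX => by
          obtain ⟨Y, hY, haY⟩ := hatomC a ha haX
          exact haY.trans (hj.1 (by exact_mod_cast hY)))
        exact hjG ((hXj.antisymm hjX) ▸ hXG)
end Nested

section MaxFactors
variable [SemilatticeInf L] [OrderBot L] [Fintype L] [DecidableEq L] {G : Set L}

noncomputable def maxEls (S : Finset L) : Finset L :=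
  S.filter (fun X => ∀ Y ∈ S, X ≤ Y → X = Y)

lemma maxEls_subset {S : Finset L} : maxEls S ⊆ S := Finset.filter_subset _ _

lemma le_maxEls {S : Finset L} {x : L} (hx : x ∈ S) : ∃ m ∈ maxEls S, x ≤ m := by
  obtain ⟨m, hm, hxm, hmax⟩ := exists_maximal_above S hx
  exact ⟨m, Finset.mem_filter.mpr ⟨hm, hmax⟩, hxm⟩

lemma maxEls_antichain {S : Finset L} : IsAntichain (· ≤ ·) (↑(maxEls S) : Set L) := by
  intro u hu v hv huv hle
  rw [Finset.mem_coe, maxEls, Finset.mem_filter] at hu hv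
  exact huv (hu.2 v hv.1 hle)

lemma maxEls_nonempty {S : Finset L} (h : S.Nonempty) : (maxEls S).Nonempty := by
  obtain ⟨x, hx⟩ := h
  obtain ⟨m, hm, _⟩ := le_maxEls hx
  exact ⟨m, hm⟩

/-- upper bounds of the supporting atom set = upper bounds of the maximal elements -/
lemma ub_atoms_eq (hAtomic : ∀ X : L, IsLUB {a : L | IsAtom a ∧ a ≤ X} X) (S : Finset L) :
    upperBounds {a : L | IsAtom a ∧ ∃ X ∈ S, a ≤ X} = upperBounds (↑(maxEls S) : Set L) := by
  ext z
  constructor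
  · intro hz m hm
    refine le_of_atoms hAtomic (fun a ha haX => hz ⟨ha, m, maxEls_subset (Finset.mem_coe.mp hm), haX⟩)
  · rintro hz a ⟨ha, X, hX, haX⟩
    obtain ⟨m, hm, hXm⟩ := le_maxEls hX
    exact (haX.trans hXm).trans (hz (Finset.mem_coe.mpr hm))

lemma isLUB_atoms_iff (hAtomic : ∀ X : L, IsLUB {a : L | IsAtom a ∧ a ≤ X} X)
    (S : Finset L) (j : L) :
    IsLUB {a : L | IsAtom a ∧ ∃ X ∈ S, a ≤ X} j ↔ IsLUB (↑(maxEls S) : Set L) j := by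
  unfold IsLUB
  rw [ub_atoms_eq hAtomic]

lemma lub_atoms_exists (hAtomic : ∀ X : L, IsLUB {a : L | IsAtom a ∧ a ≤ X} X)
    {S : Finset L} (hS : IsNested G S) (hne : S.Nonempty) :
    ∃ j, IsLUB {a : L | IsAtom a ∧ ∃ X ∈ S, a ≤ X} j := by
  rcases eq_or_lt_of_le (Finset.one_le_card.mpr (maxEls_nonempty hne)) with h1 | h2
  · obtain ⟨m, hm⟩ := Finset.card_eq_one.mp h1.symm
    refine ⟨m, (isLUB_atoms_iff hAtomic S m).mpr ?_⟩
    rw [hm, Finset.coe_singleton]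
    exact isLUB_singleton
  · obtain ⟨j, hj, _⟩ := hS.2 (maxEls S) maxEls_subset maxEls_antichain h2
    exact ⟨j, (isLUB_atoms_iff hAtomic S j).mpr hj⟩

/-- the maximal elements of a nonempty nested set are the factors of the join of its atoms -/
lemma max_eq_factors (hAtomic : ∀ X : L, IsLUB {a : L | IsAtom a ∧ a ≤ X} X)
    (hG : IsBuilding L G) {S : Finset L} (hS : IsNested G S) (hne : S.Nonempty) {j : L}
    (hj : IsLUB {a : L | IsAtom a ∧ ∃ X ∈ S, a ≤ X} j) :
    (↑(maxEls S) : Set L) = factorsSet G j := by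
  have hjM : IsLUB (↑(maxEls S) : Set L) j := (isLUB_atoms_iff hAtomic S j).mp hj
  have hMG : (↑(maxEls S) : Set L) ⊆ G := fun x hx => hS.1 (Finset.coe_subset.mpr maxEls_subset hx)
  rcases eq_or_lt_of_le (Finset.one_le_card.mpr (maxEls_nonempty hne)) with h1 | h2
  · -- single maximal element
    obtain ⟨m, hm⟩ := Finset.card_eq_one.mp h1.symm
    have hjm : j = m := by
      refine hjM.unique ?_
      rw [hm, Finset.coe_singleton]
      exact isLUB_singleton
    subst hjm
    rw [hm, Finset.coe_singleton, factors_self (hMG (by rw [hm]; simp))]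
  · -- at least two maximal elements
    obtain ⟨j', hj', hj'G⟩ := hS.2 (maxEls S) maxEls_subset maxEls_antichain h2
    have hjj' : j = j' := hjM.unique hj'
    have hjG : j ∉ G := hjj' ▸ hj'G
    have hjbot : j ≠ ⊥ := by
      obtain ⟨m, hm⟩ := maxEls_nonempty hne
      intro e
      exact (hS.ne_bot hG (maxEls_subset hm))
        (le_bot_iff.mp (e ▸ hjM.1 (Finset.mem_coe.mpr hm)))
    obtain ⟨hfne, hinf, hlubfac⟩ := building_master hG hjbot
    have hrev : factorsSet G j ⊆ (↑(maxEls S) : Set L) := by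
      intro g hg
      have hglub : IsLUB {x | x ∈ (↑(maxEls S) : Set L) ∧ x ≤ g} g :=
        hlubfac _ hMG hjM g hg
      set N : Finset L := (maxEls S).filter (· ≤ g) with hN
      have hNcoe : (↑N : Set L) = {x | x ∈ (↑(maxEls S) : Set L) ∧ x ≤ g} := by
        ext x; simp [hN]
      have hglub' : IsLUB (↑N : Set L) g := by rw [hNcoe]; exact hglub
      rcases Finset.eq_empty_or_nonempty N with hNe | hNne
      · exfalso
        rw [hNe, Finset.coe_empty] at hglub'
        have hgbot : g ≤ ⊥ := hglub'.2 (fun x hx => absurd hx (Set.notMem_empty x))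
        exact hG.1 g hg.1 (le_bot_iff.mp hgbot)
      rcases eq_or_lt_of_le (Finset.one_le_card.mpr hNne) with hN1 | hN2
      · obtain ⟨x, hx⟩ := Finset.card_eq_one.mp hN1.symm
        have hgx : g = x := hglub'.unique
          (by rw [hx, Finset.coe_singleton]; exact isLUB_singleton)
        have hxN : x ∈ N := by rw [hx]; exact Finset.mem_singleton_self x
        have hxm : x ∈ maxEls S := (Finset.mem_filter.mp hxN).1
        rw [hgx]; exact Finset.mem_coe.mpr hxm
      · exfalso
        have hNanti : IsAntichain (· ≤ ·) (↑N : Set L) :=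
          maxEls_antichain.subset (by rw [hNcoe]; exact fun x hx => hx.1)
        obtain ⟨j'', hj'', hj''G⟩ := hS.2 N (fun x hx =>
          maxEls_subset (Finset.mem_filter.mp hx).1) hNanti hN2
        exact hj''G (hglub'.unique hj'' ▸ hg.1)
    apply Set.eq_of_subset_of_subset
    · intro m hm
      obtain ⟨g, hg, hmg⟩ := le_factor (hMG hm) (hjM.1 hm)
      have hgS : g ∈ S := maxEls_subset (Finset.mem_coe.mp (hrev hg))
      have hm' := Finset.mem_coe.mp hm
      rw [maxEls, Finset.mem_filter] at hm'
      rw [hm'.2 g hgS hmg]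
      exact hg
    · exact hrev
end MaxFactors

section Eval
variable [SemilatticeInf L] [OrderBot L] [Fintype L] [DecidableEq L] {G : Set L}

lemma eval_sum (S : Finset L) (c : L → ℝ) (a : Atoms L) :
    (∑ X ∈ S, c X • charVec X) a = ∑ X ∈ S.filter (fun X => a.1 ≤ X), c X := by
  rw [Finset.sum_apply, Finset.sum_filter]
  refine Finset.sum_congr rfl fun X _ => ?_
  by_cases h : a.1 ≤ X <;> simp [charVec, h]

lemma eval_pos_iff {S : Finset L} {c : L → ℝ} (hc : ∀ X ∈ S, 0 < c X) (a : Atoms L) :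
    (0 < ∑ X ∈ S.filter (fun X => a.1 ≤ X), c X) ↔ ∃ X ∈ S, a.1 ≤ X := by
  constructor
  · intro h
    by_contra hne
    push_neg at hne
    rw [Finset.filter_false_of_mem (fun X hX => hne X hX), Finset.sum_empty] at h
    exact lt_irrefl 0 h
  · rintro ⟨X, hX, haX⟩
    exact Finset.sum_pos (fun i hi => hc i (Finset.mem_filter.mp hi).1)
      ⟨X, Finset.mem_filter.mpr ⟨hX, haX⟩⟩

lemma linIndep (hAtomic : ∀ X : L, IsLUB {a : L | IsAtom a ∧ a ≤ X} X)
    (hG : IsBuilding L G) {S : Finset L} (hS : IsNested G S) :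
    LinearIndependent ℝ (fun x : {x : L // x ∈ S} => charVec x.1) := by
  rw [Fintype.linearIndependent_iff]
  intro g hsum i
  set c : L → ℝ := fun x => if h : x ∈ S then g ⟨x, h⟩ else 0 with hcdef
  have hgs : ∀ i : {x // x ∈ S}, g i = c i.1 := fun i => by
    rw [hcdef]; simp only [i.2, dif_pos]
  have hsum' : ∑ X ∈ S, c X • charVec X = 0 := by
    rw [← Finset.sum_coe_sort S (fun X => c X • charVec X), ← hsum]
    exact Finset.sum_congr rfl fun i _ => by rw [← hgs i]
  suffices h : ∀ X ∈ S, c X = 0 by rw [hgs i]; exact h i.1 i.2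
  by_contra hne
  push_neg at hne
  obtain ⟨X0, hX0S, hX0⟩ := hne
  set P : Finset L := S.filter (fun X => c X ≠ 0) with hP
  have hPne : P.Nonempty := ⟨X0, Finset.mem_filter.mpr ⟨hX0S, hX0⟩⟩
  obtain ⟨X, hXP, hmax⟩ : ∃ m ∈ P, ∀ z ∈ P, ¬ m < z := by
    obtain ⟨m, hm⟩ := Finset.exists_maximal hPne
    exact ⟨m, hm.1, fun z hz hlt => not_le_of_gt hlt (hm.2 hz hlt.le)⟩
  have hXS : X ∈ S := (Finset.mem_filter.mp hXP).1
  obtain ⟨a, ha, haX, hpriv⟩ := private_atom hAtomic hG hS hXS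
  have h0 := congrFun hsum' ⟨a, ha⟩
  rw [eval_sum S c ⟨a, ha⟩, ] at h0
  change _ = (0:ℝ) at h0
  have hsing : ∑ Y ∈ S.filter (fun Y => (⟨a, ha⟩ : Atoms L).1 ≤ Y), c Y = c X := by
    apply Finset.sum_eq_single_of_mem X (Finset.mem_filter.mpr ⟨hXS, haX⟩)
    intro b hb hbne
    by_contra hcb
    have hbS := (Finset.mem_filter.mp hb).1
    have hbP : b ∈ P := Finset.mem_filter.mpr ⟨hbS, hcb⟩
    have hXb : X ≤ b := hpriv b hbS (Finset.mem_filter.mp hb).2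
    exact hmax b hbP (lt_of_le_of_ne hXb (fun e => hbne e.symm))
  rw [hsing] at h0
  exact (Finset.mem_filter.mp hXP).2 h0
end Eval

section Main
variable [SemilatticeInf L] [OrderBot L] [Fintype L] [DecidableEq L] {G : Set L}

lemma sum_ne_zero_of_pos (hAtomic : ∀ X : L, IsLUB {a : L | IsAtom a ∧ a ≤ X} X)
    (hG : IsBuilding L G) {T : Finset L} (hT : IsNested G T) (hTne : T.Nonempty)
    {d : L → ℝ} (hd : ∀ Y ∈ T, 0 < d Y) : ∑ Y ∈ T, d Y • charVec Y ≠ 0 := by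
  obtain ⟨Y, hY⟩ := hTne
  obtain ⟨a, ha, haY⟩ := exists_atom_le hAtomic (hT.ne_bot hG hY)
  intro h0
  have h1 := congrFun h0 ⟨a, ha⟩
  rw [eval_sum T d ⟨a, ha⟩, ] at h1
  change _ = (0:ℝ) at h1
  have h2 := (eval_pos_iff hd ⟨a, ha⟩).mpr ⟨Y, hY, haY⟩
  rw [h1] at h2
  exact lt_irrefl 0 h2

/-- `d X ≤ c X` for a common maximal element -/
lemma coeff_ge (hAtomic : ∀ X : L, IsLUB {a : L | IsAtom a ∧ a ≤ X} X)
    (hG : IsBuilding L G) {S T : Finset L} (hS : IsNested G S)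
    {c d : L → ℝ} (hd : ∀ Y ∈ T, 0 ≤ d Y)
    (heq : (∑ X ∈ S, c X • charVec X) = ∑ Y ∈ T, d Y • charVec Y)
    {X : L} (hXS : X ∈ maxEls S) (hXT : X ∈ T) : d X ≤ c X := by
  have hXS' : X ∈ S := maxEls_subset hXS
  obtain ⟨a, ha, haX, hpriv⟩ := private_atom hAtomic hG hS hXS'
  have hmaxX : ∀ Y ∈ S, X ≤ Y → X = Y := by
    have := hXS; rw [maxEls, Finset.mem_filter] at this; exact this.2
  have e1 : (∑ X ∈ S, c X • charVec X) ⟨a, ha⟩ = c X := by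
    rw [eval_sum S c ⟨a, ha⟩]
    apply Finset.sum_eq_single_of_mem X (Finset.mem_filter.mpr ⟨hXS', haX⟩)
    intro b hb hbne
    exact absurd (hmaxX b (Finset.mem_filter.mp hb).1
      (hpriv b (Finset.mem_filter.mp hb).1 (Finset.mem_filter.mp hb).2)).symm hbne
  have e2 : d X ≤ (∑ Y ∈ T, d Y • charVec Y) ⟨a, ha⟩ := by
    rw [eval_sum T d ⟨a, ha⟩]
    exact Finset.single_le_sum (fun i hi => hd i (Finset.mem_filter.mp hi).1)
      (Finset.mem_filter.mpr ⟨hXT, haX⟩)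
  rw [heq, ] at e1
  rw [e1] at e2
  exact e2

lemma main_pos (hAtomic : ∀ X : L, IsLUB {a : L | IsAtom a ∧ a ≤ X} X)
    (hG : IsBuilding L G) :
    ∀ (n : ℕ) (S T : Finset L), S.card + T.card ≤ n →
    IsNested G S → IsNested G T →
    ∀ c d : L → ℝ, (∀ X ∈ S, 0 < c X) → (∀ Y ∈ T, 0 < d Y) →
    (∑ X ∈ S, c X • charVec X) = (∑ Y ∈ T, d Y • charVec Y) →
    S = T ∧ ∀ X ∈ S, c X = d X := by
  intro n
  induction n with
  | zero =>
    intro S T hcard hS hT c d hc hd heq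
    have hS0 : S = ∅ := Finset.card_eq_zero.mp (by omega)
    have hT0 : T = ∅ := Finset.card_eq_zero.mp (by omega)
    subst hS0; subst hT0
    exact ⟨rfl, fun X hX => absurd hX (Finset.notMem_empty X)⟩
  | succ n ih =>
    intro S T hcard hS hT c d hc hd heq
    rcases Finset.eq_empty_or_nonempty S with rfl | hSne
    · rcases Finset.eq_empty_or_nonempty T with rfl | hTne
      · exact ⟨rfl, fun X hX => absurd hX (Finset.notMem_empty X)⟩
      · exfalso
        rw [Finset.sum_empty] at heq
        exact sum_ne_zero_of_pos hAtomic hG hT hTne hd heq.symm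
    rcases Finset.eq_empty_or_nonempty T with rfl | hTne
    · exfalso
      rw [Finset.sum_empty] at heq
      exact sum_ne_zero_of_pos hAtomic hG hS hSne hc heq
    -- both nonempty
    obtain ⟨j, hjS⟩ := lub_atoms_exists hAtomic hS hSne
    have hsetseq : {a : L | IsAtom a ∧ ∃ X ∈ S, a ≤ X} = {a : L | IsAtom a ∧ ∃ Y ∈ T, a ≤ Y} := by
      ext a
      constructor
      · rintro ⟨ha, hex⟩
        refine ⟨ha, ?_⟩
        have h1 := (eval_pos_iff hc ⟨a, ha⟩).mpr hex
        rw [← eval_sum S c ⟨a, ha⟩, heq, eval_sum T d ⟨a, ha⟩] at h1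
        exact (eval_pos_iff hd ⟨a, ha⟩).mp h1
      · rintro ⟨ha, hex⟩
        refine ⟨ha, ?_⟩
        have h1 := (eval_pos_iff hd ⟨a, ha⟩).mpr hex
        rw [← eval_sum T d ⟨a, ha⟩, ← heq, eval_sum S c ⟨a, ha⟩] at h1
        exact (eval_pos_iff hc ⟨a, ha⟩).mp h1
    have hjT : IsLUB {a : L | IsAtom a ∧ ∃ Y ∈ T, a ≤ Y} j := hsetseq ▸ hjS
    have hMeq : maxEls S = maxEls T := Finset.coe_injective
      ((max_eq_factors hAtomic hG hS hSne hjS).trans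
        (max_eq_factors hAtomic hG hT hTne hjT).symm)
    set M := maxEls S with hM
    have hMsubS : M ⊆ S := maxEls_subset
    have hMsubT : M ⊆ T := by rw [hMeq]; exact maxEls_subset
    have hcd : ∀ X ∈ M, c X = d X := by
      intro X hX
      have h1 : d X ≤ c X := coeff_ge hAtomic hG hS (fun Y hY => (hd Y hY).le) heq hX (hMsubT hX)
      have h2 : c X ≤ d X := coeff_ge hAtomic hG hT (fun Y hY => (hc Y hY).le) heq.symm
        (by rw [← hMeq]; exact hX) (hMsubS hX)
      exact le_antisymm h2 h1
    have hsumM : ∑ X ∈ M, c X • charVec X = ∑ X ∈ M, d X • charVec X :=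
      Finset.sum_congr rfl fun X hX => by rw [hcd X hX]
    have h1 := Finset.sum_sdiff (f := fun X => c X • charVec X) hMsubS
    have h2 := Finset.sum_sdiff (f := fun Y => d Y • charVec Y) hMsubT
    have heq2 : ∑ X ∈ S \ M, c X • charVec X = ∑ Y ∈ T \ M, d Y • charVec Y := by
      have h3 : ∑ X ∈ S \ M, c X • charVec X + ∑ X ∈ M, c X • charVec X
          = ∑ Y ∈ T \ M, d Y • charVec Y + ∑ X ∈ M, c X • charVec X := by
        rw [h1, heq, ← h2, hsumM]
      exact add_right_cancel h3
    have hMne : M.Nonempty := maxEls_nonempty hSne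
    have hcard2 : (S \ M).card + (T \ M).card ≤ n := by
      have e1 : (S \ M).card = S.card - M.card := Finset.card_sdiff_of_subset hMsubS
      have e2 : (T \ M).card = T.card - M.card := Finset.card_sdiff_of_subset hMsubT
      have e3 : 1 ≤ M.card := Finset.one_le_card.mpr hMne
      have e4 : M.card ≤ S.card := Finset.card_le_card hMsubS
      have e5 : M.card ≤ T.card := Finset.card_le_card hMsubT
      omega
    obtain ⟨hST2, hcd2⟩ := ih (S \ M) (T \ M) hcard2 (hS.subset (Finset.sdiff_subset))
      (hT.subset (Finset.sdiff_subset)) c d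
      (fun X hX => hc X (Finset.sdiff_subset hX))
      (fun Y hY => hd Y (Finset.sdiff_subset hY)) heq2
    constructor
    · calc S = S \ M ∪ M := (Finset.sdiff_union_of_subset hMsubS).symm
        _ = T \ M ∪ M := by rw [hST2]
        _ = T := Finset.sdiff_union_of_subset hMsubT
    · intro X hX
      by_cases hXM : X ∈ M
      · exact hcd X hXM
      · exact hcd2 X (Finset.mem_sdiff.mpr ⟨hX, hXM⟩)

/-- uniqueness of nested representations -/
lemma main_unique (hAtomic : ∀ X : L, IsLUB {a : L | IsAtom a ∧ a ≤ X} X)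
    (hG : IsBuilding L G) {S T : Finset L} (hS : IsNested G S) (hT : IsNested G T)
    {c d : L → ℝ} (hc : ∀ x, 0 ≤ c x) (hd : ∀ x, 0 ≤ d x)
    (heq : (∑ X ∈ S, c X • charVec X) = ∑ Y ∈ T, d Y • charVec Y) :
    S.filter (fun X => c X ≠ 0) = T.filter (fun Y => d Y ≠ 0) := by
  have hredS : ∑ X ∈ S.filter (fun X => c X ≠ 0), c X • charVec X
      = ∑ X ∈ S, c X • charVec X :=
    Finset.sum_filter_of_ne (fun X _ h => fun h0 => h (by rw [h0, zero_smul]))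
  have hredT : ∑ Y ∈ T.filter (fun Y => d Y ≠ 0), d Y • charVec Y
      = ∑ Y ∈ T, d Y • charVec Y :=
    Finset.sum_filter_of_ne (fun Y _ h => fun h0 => h (by rw [h0, zero_smul]))
  exact (main_pos hAtomic hG (S.card + T.card) _ _
    (by
      have := Finset.card_le_card (Finset.filter_subset (fun X => c X ≠ 0) S)
      have := Finset.card_le_card (Finset.filter_subset (fun Y => d Y ≠ 0) T)
      omega)
    (hS.subset (Finset.filter_subset _ _)) (hT.subset (Finset.filter_subset _ _))
    c d
    (fun X hX => lt_of_le_of_ne (hc X) (Ne.symm (Finset.mem_filter.mp hX).2))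
    (fun Y hY => lt_of_le_of_ne (hd Y) (Ne.symm (Finset.mem_filter.mp hY).2))
    (by rw [hredS, hredT]; exact heq)).1
end Main

section Final
variable [SemilatticeInf L] [OrderBot L] [Fintype L] [DecidableEq L] {G : Set L}

lemma ite_nonneg' {p : Prop} [Decidable p] {r : ℝ} (h : 0 ≤ r) :
    0 ≤ if p then r else 0 := by
  split
  · exact h
  · exact le_rfl

lemma cone_mono {S T : Finset L} (h : S ⊆ T) : coneOf S ⊆ coneOf T := by
  rintro y ⟨c, hc, rfl⟩
  refine ⟨fun x => if x ∈ S then c x else 0, fun x => ite_nonneg' (hc x), ?_⟩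
  calc ∑ x ∈ S, c x • charVec x
      = ∑ x ∈ S, (if x ∈ S then c x else 0) • charVec x :=
        Finset.sum_congr rfl fun x hx => by rw [if_pos hx]
    _ = ∑ x ∈ T, (if x ∈ S then c x else 0) • charVec x :=
        Finset.sum_subset h (fun x hxT hxS => by rw [if_neg hxS, zero_smul])

lemma charVec_mem_cone {S : Finset L} {X : L} (hX : X ∈ S) : charVec X ∈ coneOf S := by
  refine ⟨fun x => if x = X then 1 else 0, fun x => ite_nonneg' zero_le_one, ?_⟩
  rw [Finset.sum_eq_single_of_mem X hX (fun b _ hb => by simp [hb])]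
  simp

theorem stmt16' (hAtomic : ∀ X : L, IsLUB {a : L | IsAtom a ∧ a ≤ X} X)
    (hG : IsBuilding L G) :
    (∀ S : Finset L, IsNested G S →
      LinearIndependent ℝ (fun x : {x : L // x ∈ S} => charVec x.1)) ∧
    (∀ S T : Finset L, IsNested G S → IsNested G T →
      coneOf S ∩ coneOf T = coneOf (S ∩ T)) ∧
    (∀ S T : Finset L, IsNested G S → IsNested G T →
      (coneOf (L := L) S ⊆ coneOf T ↔ S ⊆ T)) ∧
    (∀ S T : Finset L, IsNested G S → T ⊆ S → IsNested G T) := by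
  refine ⟨fun S hS => linIndep hAtomic hG hS, ?_, ?_, fun S T hS hTS => hS.subset hTS⟩
  · -- intersections
    intro S T hS hT
    apply Set.eq_of_subset_of_subset
    · rintro y ⟨⟨c, hc, hyc⟩, ⟨d, hd, hyd⟩⟩
      have heq : (∑ X ∈ S, c X • charVec X) = ∑ Y ∈ T, d Y • charVec Y :=
        hyc.symm.trans hyd
      have hfilt := main_unique hAtomic hG hS hT hc hd heq
      have hFsub : S.filter (fun X => c X ≠ 0) ⊆ S ∩ T := by
        intro x hx
        refine Finset.mem_inter.mpr ⟨Finset.filter_subset _ _ hx, ?_⟩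
        rw [hfilt] at hx
        exact Finset.filter_subset _ _ hx
      refine ⟨fun x => if x ∈ S.filter (fun X => c X ≠ 0) then c x else 0,
        fun x => ite_nonneg' (hc x), ?_⟩
      calc y = ∑ X ∈ S, c X • charVec X := hyc
        _ = ∑ X ∈ S.filter (fun X => c X ≠ 0), c X • charVec X :=
          (Finset.sum_subset (Finset.filter_subset _ _) (fun x hxS hxF => by
            have hx0 : ¬ c x ≠ 0 := fun hne => hxF (Finset.mem_filter.mpr ⟨hxS, hne⟩)
            rw [not_not.mp hx0, zero_smul])).symm
        _ = ∑ X ∈ S.filter (fun X => c X ≠ 0),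
              (if X ∈ S.filter (fun X => c X ≠ 0) then c X else 0) • charVec X :=
          Finset.sum_congr rfl fun x hx => by rw [if_pos hx]
        _ = ∑ X ∈ S ∩ T, (if X ∈ S.filter (fun X => c X ≠ 0) then c X else 0) • charVec X :=
          Finset.sum_subset hFsub (fun x _ hxF => by rw [if_neg hxF, zero_smul])
    · intro y hy
      exact ⟨cone_mono Finset.inter_subset_left hy, cone_mono Finset.inter_subset_right hy⟩
  · -- inclusions
    intro S T hS hT
    constructor
    · intro h X hXS
      obtain ⟨d, hd, hvd⟩ := h (charVec_mem_cone hXS)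
      have h1 : ∑ x ∈ ({X} : Finset L), (fun _ : L => (1:ℝ)) x • charVec x = charVec X := by
        rw [Finset.sum_singleton, one_smul]
      have hfilt := main_unique hAtomic hG
        (hS.subset (Finset.singleton_subset_iff.mpr hXS)) hT
        (c := fun _ : L => (1:ℝ)) (d := d) (fun _ => zero_le_one) hd (h1.trans hvd)
      have hXmem : X ∈ T.filter (fun Y => d Y ≠ 0) := by
        rw [← hfilt]
        refine Finset.mem_filter.mpr ⟨Finset.mem_singleton_self X, one_ne_zero⟩
      exact Finset.filter_subset _ _ hXmem
    · intro h
      exact cone_mono h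
end Final

/-- For a finite atomic meet-semilattice `L` and building set `G`,
the collection `Σ(L,G) = {V(S) : S ∈ N(L,G)}` of cones spanned by
characteristic vectors is a simplicial fan whose face poset coincides with
the face poset of `N(L,G)`: the generating vectors of each cone are linearly
independent, cones intersect in the cone of the common subface, cone
inclusion corresponds to face inclusion, and the complex is closed under
subsets. -/
theorem stmt16 (L : Type*) [SemilatticeInf L] [OrderBot L] [Fintype L] [DecidableEq L]
    (hAtomic : ∀ X : L, IsLUB {a : L | IsAtom a ∧ a ≤ X} X)
    (G : Set L) (hG : IsBuilding L G) :
    (∀ S : Finset L, IsNested G S →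
      LinearIndependent ℝ (fun x : {x : L // x ∈ S} => charVec x.1)) ∧
    (∀ S T : Finset L, IsNested G S → IsNested G T →
      coneOf S ∩ coneOf T = coneOf (S ∩ T)) ∧
    (∀ S T : Finset L, IsNested G S → IsNested G T →
      (coneOf (L := L) S ⊆ coneOf T ↔ S ⊆ T)) ∧
    (∀ S T : Finset L, IsNested G S → T ⊆ S → IsNested G T) := by
  exact stmt16' hAtomic hG
end
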